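/- arXiv:0812.4364 — 3 statements merged into one kernel-verified Lean document; each statement's English description precedes it below -/
import Mathlib

section
/- (Du Bois-Reymond step.) Let (x,w) ∈ 𝒪 be such that DS_L(x,w)[ξ] = 0 for every ξ = (y,z) ∈ H whose path vanishes at both endpoints (i.e. y = 0 and ∫₀¹ z(s) ds = 0). Then there exists a vector u ∈ ℝ^n such that ∂L/∂v(t, γ_{x,w}(t), w(t)) = u + ∫₀^t ∂L/∂q(s, γ_{x,w}(s), w(s)) ds for almost every t ∈ [0,1]. -/
open MeasureTheory Set Filter Topology ContDiff
open scoped RealInnerProductSpace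

noncomputable section

/-- Euclidean space `ℝ^n`. -/
abbrev E (n : ℕ) : Type := EuclideanSpace ℝ (Fin n)

/-- Lebesgue measure restricted to the interval `[0,1]`. -/
abbrev μ01 : Measure ℝ := volume.restrict (Set.Icc (0:ℝ) 1)

instance : IsFiniteMeasure μ01 :=
  ⟨by rw [Measure.restrict_apply_univ]; simp [Real.volume_Icc]⟩

/-- The Hilbert space `H = ℝ^n × L²([0,1],ℝ^n)`, the standard model of `H¹([0,1],ℝ^n)`
via `u ↦ (u 0, u')`. -/
abbrev Hsp (n : ℕ) : Type := E n × Lp (E n) 2 μ01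

variable {n : ℕ}

/-- The absolutely continuous path associated to `(x,w) ∈ H`:  `t ↦ x + ∫_0^t w(s) ds`. -/
def pathH (p : Hsp n) : ℝ → E n :=
  fun t => p.1 + ∫ s in Set.Ioc (0:ℝ) t, p.2 s ∂μ01

/-- The open set `𝒪 ⊆ H` of those `(x,w)` whose path stays in `U`. -/
def actO (U : Set (E n)) : Set (Hsp n) :=
  {p | ∀ t ∈ Set.Icc (0:ℝ) 1, pathH p t ∈ U}

/-- The Lagrangian action functional `S_L`. -/
def action (L : ℝ → E n → E n → ℝ) (p : Hsp n) : ℝ :=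
  ∫ t, L t (pathH p t) (p.2 t) ∂μ01

/-- The first differential of the action functional:
`DS_L(p)[ξ] = ∫_0^1 ( ∂L/∂q · ξ + ∂L/∂v · ξ' ) dt`. -/
def dAct (Lq Lv : ℝ → E n → E n → E n) (p ξ : Hsp n) : ℝ :=
  ∫ t, (⟪Lq t (pathH p t) (p.2 t), pathH ξ t⟫ + ⟪Lv t (pathH p t) (p.2 t), ξ.2 t⟫) ∂μ01

/-- The second Gateaux differential of the action functional:
`d²S_L(p)[ξ,η] = ∫_0^1 ( ∂²L/∂v² ξ'·η' + ∂²L/∂v∂q ξ'·η + ∂²L/∂q∂v ξ·η' + ∂²L/∂q² ξ·η ) dt`. -/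
def d2Act (Lvv Lqv Lqq : ℝ → E n → E n → (E n →L[ℝ] E n)) (p ξ η : Hsp n) : ℝ :=
  ∫ t, (⟪Lvv t (pathH p t) (p.2 t) (ξ.2 t), η.2 t⟫
      + ⟪Lqv t (pathH p t) (p.2 t) (pathH ξ t), η.2 t⟫
      + ⟪Lqv t (pathH p t) (p.2 t) (pathH η t), ξ.2 t⟫
      + ⟪Lqq t (pathH p t) (p.2 t) (pathH ξ t), pathH η t⟫) ∂μ01

/-- The `H`-inner product `⟨(x,w),(y,z)⟩ = x·y + ⟨w,z⟩_{L²}`. -/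
def innH (p q : Hsp n) : ℝ := ⟪p.1, q.1⟫ + ⟪p.2, q.2⟫

lemma pathH_add (p q : Hsp n) (t : ℝ) (_ht : t ∈ Set.Icc (0:ℝ) 1) :
    pathH (p + q) t = pathH p t + pathH q t := by
  have hint : ∀ r : Hsp n, Integrable (r.2 : ℝ → E n) (μ01.restrict (Set.Ioc (0:ℝ) t)) :=
    fun r => ((Lp.memLp r.2).integrable (by norm_num)).restrict
  have h1 : (((p + q).2 : Lp (E n) 2 μ01) : ℝ → E n)
      =ᵐ[μ01.restrict (Set.Ioc (0:ℝ) t)] fun s => p.2 s + q.2 s :=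
    ae_restrict_of_ae (Lp.coeFn_add p.2 q.2)
  have h2 : ∫ s in Set.Ioc (0:ℝ) t, (p + q).2 s ∂μ01
      = (∫ s in Set.Ioc (0:ℝ) t, p.2 s ∂μ01) + ∫ s in Set.Ioc (0:ℝ) t, q.2 s ∂μ01 := by
    rw [integral_congr_ae h1]
    exact integral_add (hint p) (hint q)
  simp only [pathH, Prod.fst_add, h2]
  abel

lemma pathH_smul (c : ℝ) (p : Hsp n) (t : ℝ) (_ht : t ∈ Set.Icc (0:ℝ) 1) :
    pathH (c • p) t = c • pathH p t := by
  have h1 : (((c • p).2 : Lp (E n) 2 μ01) : ℝ → E n)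
      =ᵐ[μ01.restrict (Set.Ioc (0:ℝ) t)] fun s => c • (p.2 s) :=
    ae_restrict_of_ae (Lp.coeFn_smul c p.2)
  have h2 : ∫ s in Set.Ioc (0:ℝ) t, (c • p).2 s ∂μ01
      = c • ∫ s in Set.Ioc (0:ℝ) t, p.2 s ∂μ01 := by
    rw [integral_congr_ae h1]
    exact integral_smul c _
  simp only [pathH, Prod.smul_fst, h2, smul_add]

lemma pathH_zero (t : ℝ) (_ht : t ∈ Set.Icc (0:ℝ) 1) : pathH (0 : Hsp n) t = 0 := by
  have h1 : (((0 : Hsp n).2 : Lp (E n) 2 μ01) : ℝ → E n)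
      =ᵐ[μ01.restrict (Set.Ioc (0:ℝ) t)] fun _ => (0 : E n) :=
    ae_restrict_of_ae (Lp.coeFn_zero (E n) 2 μ01)
  simp only [pathH]
  rw [integral_congr_ae h1]
  simp

/-- The closed subspace `H_W = {(x,w) : (γ(0),γ(1)) ∈ W}` of `H`. -/
def HWsub (W : Submodule ℝ (E n × E n)) : Submodule ℝ (Hsp n) where
  carrier := {p | (pathH p 0, pathH p 1) ∈ W}
  add_mem' := by
    intro p q hp hq
    simp only [Set.mem_setOf_eq] at *
    rw [pathH_add p q 0 (by norm_num), pathH_add p q 1 (by norm_num)]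
    exact W.add_mem hp hq
  zero_mem' := by
    simp only [Set.mem_setOf_eq]
    rw [pathH_zero 0 (by norm_num), pathH_zero 1 (by norm_num)]
    exact W.zero_mem
  smul_mem' := by
    intro c p hp
    simp only [Set.mem_setOf_eq] at *
    rw [pathH_smul c p 0 (by norm_num), pathH_smul c p 1 (by norm_num)]
    exact W.smul_mem c hp

/-- The auxiliary inner product `⟨ξ,η⟩₀ = ∫ ∂²L/∂v²(t,0,0) ξ'·η' dt + ∫ ξ·η dt` on `H_W`. -/
def inn0 (Lvv : ℝ → E n → E n → (E n →L[ℝ] E n)) (ξ η : Hsp n) : ℝ :=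
  (∫ t, ⟪Lvv t 0 0 (ξ.2 t), η.2 t⟫ ∂μ01) + ∫ t, ⟪pathH ξ t, pathH η t⟫ ∂μ01

end

section AuxDBR

variable {n : ℕ}

lemma DBR.continuous_primitive {w : ℝ → E n} (hw : Integrable w μ01) :
    Continuous fun t => ∫ s in Set.Ioc (0:ℝ) t, w s ∂μ01 := by
  rw [continuous_iff_continuousAt]
  intro t
  have heq : ∀ t' : ℝ, ∫ s in Set.Ioc (0:ℝ) t', w s ∂μ01
      = ∫ s, (Set.Ioc (0:ℝ) t').indicator w s ∂μ01 := fun t' =>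
    (integral_indicator measurableSet_Ioc).symm
  simp only [heq]
  apply continuousAt_of_dominated (bound := fun s => ‖w s‖)
  · exact Eventually.of_forall fun t' =>
      hw.aestronglyMeasurable.indicator measurableSet_Ioc
  · exact Eventually.of_forall fun t' => Eventually.of_forall fun s =>
      norm_indicator_le_norm_self w s
  · exact hw.norm
  · have hnt : ∀ᵐ s ∂μ01, s ≠ t := by
      refine ae_restrict_of_ae ?_
      have : volume ({t} : Set ℝ) = 0 := Real.volume_singleton
      filter_upwards [measure_eq_zero_iff_ae_notMem.mp this] with s hs
      simpa using hs
    filter_upwards [hnt] with s hs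
    rcases lt_or_gt_of_ne hs with h | h
    · have : (fun t' => (Set.Ioc (0:ℝ) t').indicator w s) =ᶠ[𝓝 t]
          fun _ => (Set.Ioi (0:ℝ)).indicator w s := by
        filter_upwards [eventually_gt_nhds h] with t' ht'
        by_cases h0 : 0 < s
        · rw [Set.indicator_of_mem (Set.mem_Ioc.mpr ⟨h0, ht'.le⟩),
            Set.indicator_of_mem (Set.mem_Ioi.mpr h0)]
        · rw [Set.indicator_of_notMem (fun hc => h0 (Set.mem_Ioc.mp hc).1),
            Set.indicator_of_notMem (fun hc => h0 (Set.mem_Ioi.mp hc))]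
      exact this.continuousAt
    · have : (fun t' => (Set.Ioc (0:ℝ) t').indicator w s) =ᶠ[𝓝 t]
          fun _ => (0 : E n) := by
        filter_upwards [eventually_lt_nhds h] with t' ht'
        exact Set.indicator_of_notMem
          (fun hc => absurd (Set.mem_Ioc.mp hc).2 (not_le.mpr ht')) w
      exact this.continuousAt

lemma DBR.continuousOn_dual_comp {F : ℝ × E n × E n → ℝ} {S : Set (ℝ × E n × E n)}
    (hS : IsOpen S) (hF : ContDiffOn ℝ ∞ F S)
    (G : ℝ × E n × E n → E n) (ι : E n →L[ℝ] ℝ × E n × E n)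
    (hG : ∀ z ∈ S, InnerProductSpace.toDual ℝ (E n) (G z) = (fderiv ℝ F z).comp ι) :
    ContinuousOn G S := by
  have h1 : ContinuousOn (fderiv ℝ F) S :=
    hF.continuousOn_fderiv_of_isOpen hS (by norm_num)
  have h2 : ContinuousOn
      (fun z => (InnerProductSpace.toDual ℝ (E n)).symm ((fderiv ℝ F z).comp ι)) S := by
    apply Continuous.comp_continuousOn (InnerProductSpace.toDual ℝ (E n)).symm.continuous
    exact h1.clm_comp continuousOn_const
  refine h2.congr fun z hz => ?_
  dsimp only
  rw [← hG z hz, LinearIsometryEquiv.symm_apply_apply]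

lemma DBR.toDual_eq_of_partial {F : ℝ × E n × E n → ℝ} {S : Set (ℝ × E n × E n)}
    (hS : IsOpen S) (hF : ContDiffOn ℝ ∞ F S)
    {z : ℝ × E n × E n} (hz : z ∈ S)
    {g : E n → ℝ × E n × E n} {ι : E n →L[ℝ] ℝ × E n × E n} {x : E n}
    (hgι : HasFDerivAt g ι x) (hgz : g x = z)
    {G : E n} (hGrad : HasGradientAt (fun y => F (g y)) G x) :
    InnerProductSpace.toDual ℝ (E n) G = (fderiv ℝ F z).comp ι := by
  have hFd : HasFDerivAt F (fderiv ℝ F z) z := by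
    have : DifferentiableAt ℝ F z :=
      ((hF.contDiffAt (hS.mem_nhds hz)).differentiableAt (by norm_num))
    exact this.hasFDerivAt
  have hcomp : HasFDerivAt (fun y => F (g y)) ((fderiv ℝ F z).comp ι) x := by
    rw [← hgz] at hFd ⊢
    exact hFd.comp x hgι
  exact hGrad.hasFDerivAt.unique hcomp

lemma DBR.aestronglyMeasurable_comp {α : Type*} [MeasurableSpace α] {μ : Measure α}
    {G : ℝ × E n × E n → E n} {S : Set (ℝ × E n × E n)} (hS : IsOpen S)
    (hG : ContinuousOn G S) {Φ : α → ℝ × E n × E n} (hΦ : AEMeasurable Φ μ)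
    (hmem : ∀ᵐ t ∂μ, Φ t ∈ S) :
    AEStronglyMeasurable (fun t => G (Φ t)) μ := by
  classical
  have hmeas : Measurable (S.piecewise G 0) :=
    hG.measurable_piecewise continuousOn_const hS.measurableSet
  have h2 : AEMeasurable (fun t => S.piecewise G 0 (Φ t)) μ := hmeas.comp_aemeasurable hΦ
  refine h2.aestronglyMeasurable.congr ?_
  filter_upwards [hmem] with t ht
  simp [Set.piecewise_eq_of_mem _ _ _ ht]

lemma DBR.mu01_univ : (μ01 Set.univ).toReal = 1 := by
  rw [Measure.restrict_apply_univ]; simp [Real.volume_Icc]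

lemma DBR.restrict_Ioc {a b : ℝ} (ha : 0 ≤ a) (hb : b ≤ 1) :
    μ01.restrict (Set.Ioc a b) = volume.restrict (Set.Ioc a b) := by
  rw [Measure.restrict_restrict measurableSet_Ioc, Set.inter_eq_left.mpr]
  intro x hx
  exact ⟨ha.trans hx.1.le, hx.2.trans hb⟩

lemma DBR.restrict_Ioc01 : μ01.restrict (Set.Ioc (0:ℝ) 1) = μ01 := by
  rw [DBR.restrict_Ioc le_rfl le_rfl]
  exact Measure.restrict_congr_set Ioc_ae_eq_Icc

lemma DBR.restrict_Ici {s : ℝ} (h0 : 0 ≤ s) (h1 : s ≤ 1) :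
    μ01.restrict (Set.Ici s) = volume.restrict (Set.Ioc s 1) := by
  rw [Measure.restrict_restrict measurableSet_Ici]
  have hset : Set.Ici s ∩ Set.Icc 0 1 = Set.Icc s 1 := by
    ext x
    simp only [Set.mem_inter_iff, Set.mem_Ici, Set.mem_Icc]
    constructor
    · rintro ⟨hx1, _, hx3⟩; exact ⟨hx1, hx3⟩
    · rintro ⟨hx1, hx2⟩; exact ⟨hx1, h0.trans hx1, hx2⟩
  rw [hset]
  exact (Measure.restrict_congr_set Ioc_ae_eq_Icc).symm

end AuxDBR

set_option maxHeartbeats 2000000 in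
/-- (Du Bois-Reymond.) If `DS_L(x,w)` vanishes on all variations vanishing at
both endpoints, then `∂L/∂v(t,γ(t),w(t)) = u + ∫_0^t ∂L/∂q(s,γ(s),w(s)) ds` a.e. -/
theorem du_bois_reymond
    {n : ℕ} (U : Set (E n)) (hU : IsOpen U)
    (L : ℝ → E n → E n → ℝ)
    (Lq Lv : ℝ → E n → E n → E n)
    (Lvv Lqv Lvq Lqq : ℝ → E n → E n → (E n →L[ℝ] E n))
    (hL : ContDiffOn ℝ ∞ (fun z : ℝ × E n × E n => L z.1 z.2.1 z.2.2)
      (Set.univ ×ˢ U ×ˢ Set.univ))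
    (hLq : ∀ (t : ℝ), ∀ q ∈ U, ∀ v : E n, HasGradientAt (fun q' => L t q' v) (Lq t q v) q)
    (hLv : ∀ (t : ℝ), ∀ q ∈ U, ∀ v : E n, HasGradientAt (fun v' => L t q v') (Lv t q v) v)
    (hLvv : ∀ (t : ℝ), ∀ q ∈ U, ∀ v : E n, HasFDerivAt (fun v' => Lv t q v') (Lvv t q v) v)
    (hLqv : ∀ (t : ℝ), ∀ q ∈ U, ∀ v : E n, HasFDerivAt (fun q' => Lv t q' v) (Lqv t q v) q)
    (hLvq : ∀ (t : ℝ), ∀ q ∈ U, ∀ v : E n, HasFDerivAt (fun v' => Lq t q v') (Lvq t q v) v)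
    (hLqq : ∀ (t : ℝ), ∀ q ∈ U, ∀ v : E n, HasFDerivAt (fun q' => Lq t q' v) (Lqq t q v) q)
    (ℓ₁ : ℝ) (hℓ₁ : 0 < ℓ₁)
    (hL1 : ∀ t ∈ Set.Icc (0:ℝ) 1, ∀ q ∈ U, ∀ v : E n,
      ‖Lvv t q v‖ ≤ ℓ₁ ∧ ‖Lqv t q v‖ ≤ ℓ₁ * (1 + ‖v‖) ∧ ‖Lvq t q v‖ ≤ ℓ₁ * (1 + ‖v‖)
        ∧ ‖Lqq t q v‖ ≤ ℓ₁ * (1 + ‖v‖ ^ 2))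
    (p : Hsp n) (hp : p ∈ actO U)
    (hcrit : ∀ ξ : Hsp n, ξ.1 = 0 → pathH ξ 1 = 0 → dAct Lq Lv p ξ = 0) :
    ∃ u : E n, ∀ᵐ t ∂μ01,
      Lv t (pathH p t) (p.2 t)
        = u + ∫ s in Set.Ioc (0:ℝ) t, Lq s (pathH p s) (p.2 s) ∂μ01 := by
  classical
  set F : ℝ × E n × E n → ℝ := fun z => L z.1 z.2.1 z.2.2 with hF_def
  set S : Set (ℝ × E n × E n) := Set.univ ×ˢ U ×ˢ Set.univ with hS_def
  have hSopen : IsOpen S := isOpen_univ.prod (hU.prod isOpen_univ)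
  have hmemS : ∀ (t : ℝ) (q v : E n), q ∈ U → ((t, q, v) : ℝ × E n × E n) ∈ S :=
    fun t q v hq => ⟨trivial, hq, trivial⟩
  set ιv : E n →L[ℝ] ℝ × E n × E n :=
    (0 : E n →L[ℝ] ℝ).prod ((0 : E n →L[ℝ] E n).prod (ContinuousLinearMap.id ℝ (E n)))
    with hιv_def
  set ιq : E n →L[ℝ] ℝ × E n × E n :=
    (0 : E n →L[ℝ] ℝ).prod ((ContinuousLinearMap.id ℝ (E n)).prod (0 : E n →L[ℝ] E n))
    with hιq_def
  have hLvDual : ∀ z ∈ S, InnerProductSpace.toDual ℝ (E n) (Lv z.1 z.2.1 z.2.2)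
      = (fderiv ℝ F z).comp ιv := by
    intro z hz
    refine DBR.toDual_eq_of_partial hSopen hL hz
      (g := fun e => (z.1, z.2.1, e)) (x := z.2.2) ?_ rfl ?_
    · exact HasFDerivAt.prodMk (hasFDerivAt_const z.1 _) (HasFDerivAt.prodMk (hasFDerivAt_const z.2.1 _) (hasFDerivAt_id _))
    · exact hLv z.1 z.2.1 hz.2.1 z.2.2
  have hLqDual : ∀ z ∈ S, InnerProductSpace.toDual ℝ (E n) (Lq z.1 z.2.1 z.2.2)
      = (fderiv ℝ F z).comp ιq := by
    intro z hz
    refine DBR.toDual_eq_of_partial hSopen hL hz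
      (g := fun e => (z.1, e, z.2.2)) (x := z.2.1) ?_ rfl ?_
    · exact HasFDerivAt.prodMk (hasFDerivAt_const z.1 _) (HasFDerivAt.prodMk (hasFDerivAt_id _) (hasFDerivAt_const z.2.2 _))
    · exact hLq z.1 z.2.1 hz.2.1 z.2.2
  have hLvcont : ContinuousOn (fun z : ℝ × E n × E n => Lv z.1 z.2.1 z.2.2) S :=
    DBR.continuousOn_dual_comp hSopen hL _ ιv hLvDual
  have hLqcont : ContinuousOn (fun z : ℝ × E n × E n => Lq z.1 z.2.1 z.2.2) S :=
    DBR.continuousOn_dual_comp hSopen hL _ ιq hLqDual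
  -- the path and its properties
  have hw2 : MemLp (p.2 : ℝ → E n) 2 μ01 := Lp.memLp p.2
  have hw1 : Integrable (p.2 : ℝ → E n) μ01 := hw2.integrable one_le_two
  have hγc : Continuous (pathH p) := by
    have h := DBR.continuous_primitive hw1
    exact continuous_const.add h
  have hγU : ∀ t ∈ Set.Icc (0:ℝ) 1, pathH p t ∈ U := hp
  have haeIcc : ∀ᵐ t ∂μ01, t ∈ Set.Icc (0:ℝ) 1 := ae_restrict_mem measurableSet_Icc
  have hΦ : AEMeasurable (fun t => ((t, pathH p t, p.2 t) : ℝ × E n × E n)) μ01 :=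
    aemeasurable_id.prodMk (hγc.aemeasurable.prodMk (Lp.aestronglyMeasurable p.2).aemeasurable)
  have hmemae : ∀ᵐ t ∂μ01, ((t, pathH p t, p.2 t) : ℝ × E n × E n) ∈ S := by
    filter_upwards [haeIcc] with t ht using hmemS _ _ _ (hγU t ht)
  set f : ℝ → E n := fun t => Lv t (pathH p t) (p.2 t) with hf_def
  set g : ℝ → E n := fun t => Lq t (pathH p t) (p.2 t) with hg_def
  have hfm : AEStronglyMeasurable f μ01 :=
    DBR.aestronglyMeasurable_comp hSopen hLvcont hΦ hmemae
  have hgm : AEStronglyMeasurable g μ01 :=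
    DBR.aestronglyMeasurable_comp hSopen hLqcont hΦ hmemae
  -- bounds
  obtain ⟨C₀, hC₀⟩ : ∃ C, ∀ t ∈ Set.Icc (0:ℝ) 1, ‖Lv t (pathH p t) 0‖ ≤ C := by
    have hcont : ContinuousOn (fun t : ℝ => Lv t (pathH p t) 0) (Set.Icc 0 1) := by
      refine hLvcont.comp ((continuous_id.prodMk (hγc.prodMk continuous_const)).continuousOn)
        fun t ht => hmemS _ _ _ (hγU t ht)
    exact isCompact_Icc.exists_bound_of_continuousOn hcont
  obtain ⟨C₁, hC₁⟩ : ∃ C, ∀ t ∈ Set.Icc (0:ℝ) 1, ‖Lq t (pathH p t) 0‖ ≤ C := by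
    have hcont : ContinuousOn (fun t : ℝ => Lq t (pathH p t) 0) (Set.Icc 0 1) := by
      refine hLqcont.comp ((continuous_id.prodMk (hγc.prodMk continuous_const)).continuousOn)
        fun t ht => hmemS _ _ _ (hγU t ht)
    exact isCompact_Icc.exists_bound_of_continuousOn hcont
  have hLvlip : ∀ t ∈ Set.Icc (0:ℝ) 1, ∀ q ∈ U, ∀ v : E n,
      ‖Lv t q v - Lv t q 0‖ ≤ ℓ₁ * ‖v‖ := by
    intro t ht q hq v
    have := convex_univ.norm_image_sub_le_of_norm_hasFDerivWithin_le
      (f := fun v' => Lv t q v') (f' := fun v' => Lvv t q v')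
      (fun x _ => (hLvv t q hq x).hasFDerivWithinAt)
      (fun x _ => (hL1 t ht q hq x).1) (Set.mem_univ 0) (Set.mem_univ v)
    simpa using this
  have hLqlip : ∀ t ∈ Set.Icc (0:ℝ) 1, ∀ q ∈ U, ∀ v : E n,
      ‖Lq t q v - Lq t q 0‖ ≤ ℓ₁ * (1 + ‖v‖) * ‖v‖ := by
    intro t ht q hq v
    have := (convex_closedBall (0 : E n) ‖v‖).norm_image_sub_le_of_norm_hasFDerivWithin_le
      (f := fun v' => Lq t q v') (f' := fun v' => Lvq t q v') (C := ℓ₁ * (1 + ‖v‖))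
      (fun x _ => (hLvq t q hq x).hasFDerivWithinAt)
      (fun x hx => by
        refine ((hL1 t ht q hq x).2.2.1).trans ?_
        have hxv : ‖x‖ ≤ ‖v‖ := mem_closedBall_zero_iff.mp hx
        exact mul_le_mul_of_nonneg_left (by linarith) hℓ₁.le)
      (mem_closedBall_zero_iff.mpr (by rw [norm_zero]; exact norm_nonneg v))
      (mem_closedBall_zero_iff.mpr le_rfl)
    simpa using this
  have hfb : ∀ᵐ t ∂μ01, ‖f t‖ ≤ |C₀| + ℓ₁ * ‖p.2 t‖ := by
    filter_upwards [haeIcc] with t ht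
    have h1 := hLvlip t ht _ (hγU t ht) (p.2 t)
    have h2 := hC₀ t ht
    calc ‖f t‖ = ‖Lv t (pathH p t) 0 + (f t - Lv t (pathH p t) 0)‖ := by
          rw [add_sub_cancel]
      _ ≤ ‖Lv t (pathH p t) 0‖ + ‖f t - Lv t (pathH p t) 0‖ := norm_add_le _ _
      _ ≤ |C₀| + ℓ₁ * ‖p.2 t‖ := add_le_add (h2.trans (le_abs_self _)) h1
  have hgb : ∀ᵐ t ∂μ01, ‖g t‖ ≤ |C₁| + (ℓ₁ * ‖p.2 t‖ + ℓ₁ * ‖p.2 t‖ ^ 2) := by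
    filter_upwards [haeIcc] with t ht
    have h1 := hLqlip t ht _ (hγU t ht) (p.2 t)
    have h2 := hC₁ t ht
    have : ℓ₁ * (1 + ‖p.2 t‖) * ‖p.2 t‖ = ℓ₁ * ‖p.2 t‖ + ℓ₁ * ‖p.2 t‖ ^ 2 := by ring
    calc ‖g t‖ = ‖Lq t (pathH p t) 0 + (g t - Lq t (pathH p t) 0)‖ := by
          rw [add_sub_cancel]
      _ ≤ ‖Lq t (pathH p t) 0‖ + ‖g t - Lq t (pathH p t) 0‖ := norm_add_le _ _
      _ ≤ |C₁| + (ℓ₁ * ‖p.2 t‖ + ℓ₁ * ‖p.2 t‖ ^ 2) := by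
          rw [← this]; exact add_le_add (h2.trans (le_abs_self _)) h1
  -- integrability of f and g
  have hbound2 : MemLp (fun t => |C₀| + ℓ₁ * ‖p.2 t‖) 2 μ01 :=
    (memLp_const (|C₀|)).add (hw2.norm.const_mul ℓ₁)
  have hf2 : MemLp f 2 μ01 := by
    refine MemLp.of_le hbound2 hfm ?_
    filter_upwards [hfb] with t ht
    rwa [Real.norm_of_nonneg (add_nonneg (abs_nonneg _)
      (mul_nonneg hℓ₁.le (norm_nonneg _)))]
  have hf1 : Integrable f μ01 := hf2.integrable one_le_two
  have hwsq : Integrable (fun t => ‖p.2 t‖ ^ 2) μ01 := by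
    have h := MeasureTheory.L2.integrable_inner (𝕜 := ℝ) p.2 p.2
    refine h.congr (Eventually.of_forall fun t => ?_)
    exact real_inner_self_eq_norm_sq _
  have hboundg : Integrable (fun t => |C₁| + (ℓ₁ * ‖p.2 t‖ + ℓ₁ * ‖p.2 t‖ ^ 2)) μ01 :=
    (integrable_const _).add ((hw1.norm.const_mul ℓ₁).add (hwsq.const_mul ℓ₁))
  have hg1 : Integrable g μ01 := by
    refine Integrable.mono' hboundg hgm ?_
    filter_upwards [hgb] with t ht using ht
  -- the primitive of g
  set G : ℝ → E n := fun t => ∫ s in Set.Ioc (0:ℝ) t, g s ∂μ01 with hG_def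
  have hGc : Continuous G := DBR.continuous_primitive hg1
  have hGbd : ∀ t, ‖G t‖ ≤ ∫ s, ‖g s‖ ∂μ01 := by
    intro t
    refine (norm_integral_le_integral_norm _).trans ?_
    exact integral_mono_measure Measure.restrict_le_self
      (Eventually.of_forall fun s => norm_nonneg _) hg1.norm
  have hG2 : MemLp G 2 μ01 :=
    MemLp.of_bound hGc.aestronglyMeasurable _ (Eventually.of_forall hGbd)
  -- the test variation
  set h' : ℝ → E n := fun t => f t - G t with hh'_def
  have hh'2 : MemLp h' 2 μ01 := hf2.sub hG2
  have hh'1 : Integrable h' μ01 := hh'2.integrable one_le_two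
  set m : E n := ∫ t, h' t ∂μ01 with hm_def
  have hzmem : MemLp (fun t => h' t - m) 2 μ01 := hh'2.sub (memLp_const m)
  set z : Lp (E n) 2 μ01 := hzmem.toLp _ with hz_def
  have hz_ae : (z : ℝ → E n) =ᵐ[μ01] fun t => h' t - m := hzmem.coeFn_toLp
  have hzm : AEStronglyMeasurable (z : ℝ → E n) μ01 := Lp.aestronglyMeasurable z
  have hz1 : Integrable (z : ℝ → E n) μ01 := (Lp.memLp z).integrable one_le_two
  have hintz : ∫ t, z t ∂μ01 = 0 := by
    rw [integral_congr_ae hz_ae, integral_sub hh'1 (integrable_const m),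
      integral_const, measureReal_def, DBR.mu01_univ, one_smul, ← hm_def, sub_self]
  have hpath1 : pathH ((0 : E n), z) 1 = 0 := by
    show (0 : E n) + ∫ s in Set.Ioc (0:ℝ) 1, z s ∂μ01 = 0
    rw [zero_add]
    calc ∫ s in Set.Ioc (0:ℝ) 1, z s ∂μ01 = ∫ s, z s ∂μ01 := by rw [DBR.restrict_Ioc01]
      _ = 0 := hintz
  have hd := hcrit ((0 : E n), z) rfl hpath1
  set Z : ℝ → E n := fun t => ∫ s in Set.Ioc (0:ℝ) t, z s ∂μ01 with hZ_def
  have hpathz : ∀ t : ℝ, pathH ((0 : E n), z) t = Z t := fun t => zero_add _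
  have hd' : ∫ t, (⟪g t, Z t⟫ + ⟪f t, z t⟫) ∂μ01 = 0 := by
    rw [← hd]
    unfold dAct
    refine integral_congr_ae (Eventually.of_forall fun t => ?_)
    simp only [hpathz]
    rfl
  have hZc : Continuous Z := DBR.continuous_primitive hz1
  have hZbd : ∀ t, ‖Z t‖ ≤ ∫ s, ‖z s‖ ∂μ01 := fun t =>
    (norm_integral_le_integral_norm _).trans (integral_mono_measure
      Measure.restrict_le_self (Eventually.of_forall fun s => norm_nonneg _) hz1.norm)
  have hI1 : Integrable (fun t => ⟪g t, Z t⟫) μ01 := by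
    refine Integrable.mono' (hg1.norm.mul_const (∫ s, ‖z s‖ ∂μ01))
      (hgm.inner hZc.aestronglyMeasurable) ?_
    refine Eventually.of_forall fun t => ?_
    calc ‖⟪g t, Z t⟫‖ ≤ ‖g t‖ * ‖Z t‖ := norm_inner_le_norm _ _
      _ ≤ ‖g t‖ * ∫ s, ‖z s‖ ∂μ01 := mul_le_mul_of_nonneg_left (hZbd t) (norm_nonneg _)
  have hI2 : Integrable (fun t => ⟪f t, z t⟫) μ01 := by
    have h := MeasureTheory.L2.integrable_inner (𝕜 := ℝ) (hf2.toLp f) z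
    refine h.congr ?_
    filter_upwards [hf2.coeFn_toLp] with t ht
    rw [ht]
  -- Fubini
  set A : Set (ℝ × ℝ) := {q | 0 < q.2 ∧ q.2 ≤ q.1} with hA_def
  have hAmeas : MeasurableSet A :=
    (measurableSet_lt measurable_const measurable_snd).inter
      (measurableSet_le measurable_snd measurable_fst)
  set F2 : ℝ × ℝ → ℝ := A.indicator (fun q => ⟪g q.1, z q.2⟫) with hF2_def
  have hstepa : ∀ t, ⟪g t, Z t⟫ = ∫ s, F2 (t, s) ∂μ01 := by
    intro t
    have h1 : ⟪g t, Z t⟫ = ∫ s in Set.Ioc (0:ℝ) t, ⟪g t, z s⟫ ∂μ01 :=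
      (integral_inner hz1.restrict (g t)).symm
    rw [h1, ← integral_indicator measurableSet_Ioc]
    refine integral_congr_ae (Eventually.of_forall fun s => ?_)
    simp only [hF2_def, Set.indicator_apply, hA_def, Set.mem_Ioc, Set.mem_setOf_eq]
  have hF2int : Integrable F2 (μ01.prod μ01) := by
    have hb : Integrable (fun q : ℝ × ℝ => ‖g q.1‖ * ‖z q.2‖) (μ01.prod μ01) :=
      hg1.norm.mul_prod hz1.norm
    refine hb.mono' ((hgm.comp_fst.inner hzm.comp_snd).indicator hAmeas) ?_
    refine Eventually.of_forall fun q => ?_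
    exact (norm_indicator_le_norm_self _ _).trans (norm_inner_le_norm _ _)
  have hswap : ∫ t, ∫ s, F2 (t, s) ∂μ01 ∂μ01 = ∫ s, ∫ t, F2 (t, s) ∂μ01 ∂μ01 :=
    integral_integral_swap hF2int
  have hae01 : ∀ᵐ s ∂μ01, 0 < s ∧ s ≤ 1 := by
    have h0 : μ01 {(0:ℝ)} = 0 := by
      rw [Measure.restrict_apply (measurableSet_singleton 0)]
      exact measure_mono_null Set.inter_subset_left Real.volume_singleton
    filter_upwards [haeIcc, measure_eq_zero_iff_ae_notMem.mp h0] with s hs hs0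
    exact ⟨lt_of_le_of_ne hs.1 (Ne.symm (by simpa using hs0)), hs.2⟩
  have hGrestr : ∀ s ∈ Set.Ioc (0:ℝ) 1, ∫ t in Set.Ici s, g t ∂μ01 = G 1 - G s := by
    intro s hs
    have hgon : IntegrableOn g (Set.Icc (0:ℝ) 1) volume := hg1
    have h0s : IntegrableOn g (Set.Ioc (0:ℝ) s) volume :=
      hgon.mono_set (Set.Ioc_subset_Icc_self.trans (Set.Icc_subset_Icc le_rfl hs.2))
    have hs1 : IntegrableOn g (Set.Ioc s 1) volume :=
      hgon.mono_set (fun x hx => ⟨hs.1.le.trans hx.1.le, hx.2⟩)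
    have hunion : (∫ t in Set.Ioc (0:ℝ) s, g t ∂volume) + ∫ t in Set.Ioc s 1, g t ∂volume
        = ∫ t in Set.Ioc (0:ℝ) 1, g t ∂volume := by
      rw [← setIntegral_union (Set.Ioc_disjoint_Ioc_of_le le_rfl) measurableSet_Ioc h0s hs1,
        Set.Ioc_union_Ioc_eq_Ioc hs.1.le hs.2]
    have e1 : G 1 = ∫ t in Set.Ioc (0:ℝ) 1, g t ∂volume := by
      show (∫ t in Set.Ioc (0:ℝ) (1:ℝ), g t ∂μ01) = _
      rw [DBR.restrict_Ioc le_rfl le_rfl]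
    have e2 : G s = ∫ t in Set.Ioc (0:ℝ) s, g t ∂volume := by
      show (∫ t in Set.Ioc (0:ℝ) s, g t ∂μ01) = _
      rw [DBR.restrict_Ioc le_rfl hs.2]
    rw [DBR.restrict_Ici hs.1.le hs.2, e1, e2]
    exact eq_sub_of_add_eq' hunion
  have hinner_eq : ∀ᵐ s ∂μ01, ∫ t, F2 (t, s) ∂μ01 = ⟪G 1 - G s, z s⟫ := by
    filter_upwards [hae01] with s hs
    have hfix : ∀ t : ℝ, F2 (t, s) = (Set.Ici s).indicator (fun t => ⟪g t, z s⟫) t := by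
      intro t
      simp only [hF2_def, hA_def, Set.indicator_apply, Set.mem_setOf_eq, Set.mem_Ici]
      by_cases hts : s ≤ t
      · simp [hts, hs.1]
      · simp [hts]
    simp only [hfix]
    rw [integral_indicator measurableSet_Ici]
    have hcm : ∫ t in Set.Ici s, ⟪g t, z s⟫ ∂μ01 = ⟪z s, ∫ t in Set.Ici s, g t ∂μ01⟫ := by
      rw [← integral_inner hg1.restrict (z s)]
      exact integral_congr_ae (Eventually.of_forall fun t => real_inner_comm _ _)
    rw [hcm, hGrestr s (Set.mem_Ioc.mpr hs)]
    exact real_inner_comm _ _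
  have hIA : Integrable (fun s => ⟪G 1 - G s, z s⟫) μ01 := by
    refine Integrable.mono' (hz1.norm.const_mul (‖G 1‖ + ∫ s', ‖g s'‖ ∂μ01))
      (((continuous_const.sub hGc).aestronglyMeasurable).inner hzm) ?_
    refine Eventually.of_forall fun s => ?_
    calc ‖⟪G 1 - G s, z s⟫‖ ≤ ‖G 1 - G s‖ * ‖z s‖ := norm_inner_le_norm _ _
      _ ≤ (‖G 1‖ + ∫ s', ‖g s'‖ ∂μ01) * ‖z s‖ :=
        mul_le_mul_of_nonneg_right
          ((norm_sub_le _ _).trans (add_le_add_right (hGbd s) _)) (norm_nonneg _)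
  have key : ∫ s, ⟪(z : ℝ → E n) s, z s⟫ ∂μ01 = 0 := by
    have hsum : ∫ t, (⟪g t, Z t⟫ + ⟪f t, z t⟫) ∂μ01
        = (∫ t, ⟪g t, Z t⟫ ∂μ01) + ∫ t, ⟪f t, z t⟫ ∂μ01 := integral_add hI1 hI2
    have h1 : ∫ t, ⟪g t, Z t⟫ ∂μ01 = ∫ s, ⟪G 1 - G s, z s⟫ ∂μ01 := by
      calc ∫ t, ⟪g t, Z t⟫ ∂μ01 = ∫ t, ∫ s, F2 (t, s) ∂μ01 ∂μ01 :=
            integral_congr_ae (Eventually.of_forall fun t => hstepa t)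
        _ = ∫ s, ∫ t, F2 (t, s) ∂μ01 ∂μ01 := hswap
        _ = ∫ s, ⟪G 1 - G s, z s⟫ ∂μ01 := integral_congr_ae hinner_eq
    have h2 : (∫ s, ⟪G 1 - G s, z s⟫ ∂μ01) + ∫ s, ⟪f s, z s⟫ ∂μ01
        = ∫ s, (⟪G 1 - G s, z s⟫ + ⟪f s, z s⟫) ∂μ01 := (integral_add hIA hI2).symm
    have h3 : ∫ s, (⟪G 1 - G s, z s⟫ + ⟪f s, z s⟫) ∂μ01
        = ∫ s, (⟪(z : ℝ → E n) s, z s⟫ + ⟪m + G 1, z s⟫) ∂μ01 := by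
      refine integral_congr_ae ?_
      filter_upwards [hz_ae] with s hzs
      have hre : G 1 - G s + f s = (h' s - m) + (m + G 1) := by
        simp only [hh'_def]; abel
      calc ⟪G 1 - G s, z s⟫ + ⟪f s, z s⟫ = ⟪G 1 - G s + f s, z s⟫ :=
            (inner_add_left _ _ _).symm
        _ = ⟪(h' s - m) + (m + G 1), z s⟫ := by rw [hre]
        _ = ⟪h' s - m, z s⟫ + ⟪m + G 1, z s⟫ := inner_add_left _ _ _
        _ = ⟪(z : ℝ → E n) s, z s⟫ + ⟪m + G 1, z s⟫ := by rw [← hzs]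
    have h4 : ∫ s, (⟪(z : ℝ → E n) s, z s⟫ + ⟪m + G 1, z s⟫) ∂μ01
        = (∫ s, ⟪(z : ℝ → E n) s, z s⟫ ∂μ01) + ∫ s, ⟪m + G 1, z s⟫ ∂μ01 :=
      integral_add (MeasureTheory.L2.integrable_inner (𝕜 := ℝ) z z) (hz1.const_inner _)
    have h5 : ∫ s, ⟪m + G 1, (z : ℝ → E n) s⟫ ∂μ01 = 0 := by
      rw [integral_inner hz1, hintz, inner_zero_right]
    have hfin := hd'
    rw [hsum, h1, h2, h3, h4, h5, add_zero] at hfin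
    exact hfin
  have hz0 : ∀ᵐ s ∂μ01, (z : ℝ → E n) s = 0 := by
    have hnn : 0 ≤ fun s => ⟪(z : ℝ → E n) s, z s⟫ := fun s => real_inner_self_nonneg
    have hae := (integral_eq_zero_iff_of_nonneg hnn
      (MeasureTheory.L2.integrable_inner (𝕜 := ℝ) z z)).mp key
    filter_upwards [hae] with s hsz
    have hzz : ⟪(z : ℝ → E n) s, z s⟫ = (0:ℝ) := by
      simpa only [Pi.zero_apply] using hsz
    exact inner_self_eq_zero.mp hzz
  refine ⟨m, ?_⟩
  filter_upwards [hz0, hz_ae] with t h0 hae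
  have hm0 : h' t - m = 0 := by rw [← hae]; exact h0
  have h2 : f t - G t = m := sub_eq_zero.mp hm0
  show f t = m + G t
  exact sub_eq_iff_eq_add.mp h2
end

section
/- Conversely, let γ : [0,1] → U be a C^∞ curve with (γ(0),γ(1)) ∈ W which solves the Euler–Lagrange equation d/dt ( ∂L/∂v(t,γ(t),γ'(t)) ) = ∂L/∂q(t,γ(t),γ'(t)) on [0,1] and satisfies ∂L/∂v(0,γ(0),γ'(0))·ξ₀ = ∂L/∂v(1,γ(1),γ'(1))·ξ₁ for all (ξ₀,ξ₁) ∈ W. Then the element (γ(0), γ') belongs to 𝒪 ∩ H_W and is a critical point of S_L^W, i.e. DS_L(γ(0),γ')[ξ] = 0 for every ξ ∈ H_W. -/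
open MeasureTheory Set Filter Topology ContDiff
open scoped RealInnerProductSpace

/-- A smooth solution of the Euler–Lagrange equation with the natural boundary
condition determined by `W` gives a critical point `(γ(0),γ')` of `S_L^W`. -/
theorem smooth_solution_is_critical_point
    {n : ℕ} (U : Set (E n)) (hU : IsOpen U)
    (L : ℝ → E n → E n → ℝ)
    (Lq Lv : ℝ → E n → E n → E n)
    (Lvv Lqv Lvq Lqq : ℝ → E n → E n → (E n →L[ℝ] E n))
    (hL : ContDiffOn ℝ ∞ (fun z : ℝ × E n × E n => L z.1 z.2.1 z.2.2)
      (Set.univ ×ˢ U ×ˢ Set.univ))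
    (hLq : ∀ (t : ℝ), ∀ q ∈ U, ∀ v : E n, HasGradientAt (fun q' => L t q' v) (Lq t q v) q)
    (hLv : ∀ (t : ℝ), ∀ q ∈ U, ∀ v : E n, HasGradientAt (fun v' => L t q v') (Lv t q v) v)
    (hLvv : ∀ (t : ℝ), ∀ q ∈ U, ∀ v : E n, HasFDerivAt (fun v' => Lv t q v') (Lvv t q v) v)
    (hLqv : ∀ (t : ℝ), ∀ q ∈ U, ∀ v : E n, HasFDerivAt (fun q' => Lv t q' v) (Lqv t q v) q)
    (hLvq : ∀ (t : ℝ), ∀ q ∈ U, ∀ v : E n, HasFDerivAt (fun v' => Lq t q v') (Lvq t q v) v)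
    (hLqq : ∀ (t : ℝ), ∀ q ∈ U, ∀ v : E n, HasFDerivAt (fun q' => Lq t q' v) (Lqq t q v) q)
    (ℓ₁ : ℝ) (hℓ₁ : 0 < ℓ₁)
    (hL1 : ∀ t ∈ Set.Icc (0:ℝ) 1, ∀ q ∈ U, ∀ v : E n,
      ‖Lvv t q v‖ ≤ ℓ₁ ∧ ‖Lqv t q v‖ ≤ ℓ₁ * (1 + ‖v‖) ∧ ‖Lvq t q v‖ ≤ ℓ₁ * (1 + ‖v‖)
        ∧ ‖Lqq t q v‖ ≤ ℓ₁ * (1 + ‖v‖ ^ 2))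
    (W : Submodule ℝ (E n × E n)) (g : ℝ → E n) (hg : ContDiff ℝ ∞ g)
    (hgU : ∀ t ∈ Set.Icc (0:ℝ) 1, g t ∈ U)
    (hgW : (g 0, g 1) ∈ W)
    (hEL : ∀ t ∈ Set.Icc (0:ℝ) 1,
      HasDerivWithinAt (fun s => Lv s (g s) (deriv g s)) (Lq t (g t) (deriv g t))
        (Set.Icc (0:ℝ) 1) t)
    (hbd : ∀ ξ₀ ξ₁ : E n, (ξ₀, ξ₁) ∈ W →
      ⟪Lv 0 (g 0) (deriv g 0), ξ₀⟫ = ⟪Lv 1 (g 1) (deriv g 1), ξ₁⟫) :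
    ∃ p : Hsp n, p.1 = g 0 ∧ ((p.2 : ℝ → E n) =ᵐ[μ01] fun t => deriv g t) ∧
      (∀ t ∈ Set.Icc (0:ℝ) 1, pathH p t = g t) ∧
      p ∈ actO U ∧ p ∈ HWsub W ∧
      ∀ ξ : Hsp n, ξ ∈ HWsub W → dAct Lq Lv p ξ = 0 := by
  classical
  set A : ℝ → E n := fun t => Lq t (g t) (deriv g t) with hAdef
  set B : ℝ → E n := fun t => Lv t (g t) (deriv g t) with hBdef
  have hone : (1 : WithTop ℕ∞) ≤ ∞ := by exact_mod_cast le_top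
  have hgdiff : Differentiable ℝ g := hg.differentiable (by simp)
  have hgderiv : Continuous (deriv g) := hg.continuous_deriv hone
  -- `deriv g` is in L²(μ01)
  obtain ⟨C₀, hC₀⟩ := isCompact_Icc.exists_bound_of_continuousOn hgderiv.continuousOn
  have hwmem : MemLp (fun t => deriv g t) 2 μ01 := by
    refine MemLp.of_bound hgderiv.aestronglyMeasurable C₀ ?_
    filter_upwards [ae_restrict_mem measurableSet_Icc] with t ht
    exact hC₀ t ht
  refine ⟨(g 0, hwmem.toLp _), rfl, hwmem.coeFn_toLp, ?_⟩
  set p : Hsp n := (g 0, hwmem.toLp _) with hpdef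
  have hp2 : (p.2 : ℝ → E n) =ᵐ[μ01] fun t => deriv g t := hwmem.coeFn_toLp
  -- the path of p is g
  have hpath : ∀ t ∈ Set.Icc (0:ℝ) 1, pathH p t = g t := by
    intro t ht
    have hsub : Set.Ioc (0:ℝ) t ⊆ Set.Icc 0 1 := fun s hs => ⟨hs.1.le, hs.2.trans ht.2⟩
    have h1 : ∫ s in Set.Ioc (0:ℝ) t, p.2 s ∂μ01
        = ∫ s in Set.Ioc (0:ℝ) t, deriv g s ∂μ01 :=
      integral_congr_ae (ae_restrict_of_ae hp2)
    have h2 : ∫ s in Set.Ioc (0:ℝ) t, deriv g s ∂μ01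
        = ∫ s in Set.Ioc (0:ℝ) t, deriv g s := by
      rw [μ01, Measure.restrict_restrict measurableSet_Ioc,
        Set.inter_eq_self_of_subset_left hsub]
    have h3 : ∫ s in Set.Ioc (0:ℝ) t, deriv g s = g t - g 0 := by
      rw [← intervalIntegral.integral_of_le ht.1]
      exact intervalIntegral.integral_deriv_eq_sub (fun x _ => hgdiff.differentiableAt)
        (hgderiv.intervalIntegrable 0 t)
    simp only [pathH, h1, h2, h3]
    rw [hpdef]; simp
  have hO : p ∈ actO U := fun t ht => by rw [hpath t ht]; exact hgU t ht
  have hW : p ∈ HWsub W := by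
    show (pathH p 0, pathH p 1) ∈ W
    rw [hpath 0 (by norm_num), hpath 1 (by norm_num)]
    exact hgW
  refine ⟨hpath, hO, hW, ?_⟩
  -- continuity of B on [0,1]
  have hBcont : ContinuousOn B (Set.Icc (0:ℝ) 1) := fun t ht =>
    (hEL t ht).continuousWithinAt
  -- continuity of A on [0,1], via smoothness of L
  set f : ℝ × E n × E n → ℝ := fun z => L z.1 z.2.1 z.2.2 with hfdef
  set Ω : Set (ℝ × E n × E n) := Set.univ ×ˢ U ×ˢ Set.univ with hΩdef
  have hΩ : IsOpen Ω := isOpen_univ.prod (hU.prod isOpen_univ)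
  have hDcont : ContinuousOn (fderiv ℝ f) Ω := hL.continuousOn_fderiv_of_isOpen hΩ hone
  have key : ∀ (t : ℝ), ∀ q ∈ U, ∀ (v : E n) (e : E n),
      ⟪Lq t q v, e⟫ = fderiv ℝ f (t, q, v) (0, e, 0) := by
    intro t q hq v e
    have hmem : ((t, q, v) : ℝ × E n × E n) ∈ Ω := ⟨Set.mem_univ _, hq, Set.mem_univ _⟩
    have hfd : DifferentiableAt ℝ f (t, q, v) :=
      ((hL.contDiffAt (hΩ.mem_nhds hmem)).differentiableAt (by simp))
    have hι : HasFDerivAt (fun q' : E n => ((t, q', v) : ℝ × E n × E n))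
        ((0 : E n →L[ℝ] ℝ).prod ((ContinuousLinearMap.id ℝ (E n)).prod 0)) q :=
      (hasFDerivAt_const t q).prodMk ((hasFDerivAt_id q).prodMk (hasFDerivAt_const v q))
    have hcomp : HasFDerivAt (fun q' => L t q' v)
        ((fderiv ℝ f (t, q, v)).comp
          ((0 : E n →L[ℝ] ℝ).prod ((ContinuousLinearMap.id ℝ (E n)).prod 0))) q :=
      by have := hfd.hasFDerivAt.comp q hι; exact this
    have huniq := (hLq t q hq v).hasFDerivAt.unique hcomp
    have := congrArg (fun φ : E n →L[ℝ] ℝ => φ e) huniq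
    simpa [InnerProductSpace.toDual_apply_apply] using this
  have hAcont : ContinuousOn A (Set.Icc (0:ℝ) 1) := by
    have hcurve : ContinuousOn (fun t => ((t, g t, deriv g t) : ℝ × E n × E n))
        (Set.Icc (0:ℝ) 1) :=
      (continuous_id.prodMk (hg.continuous.prodMk hgderiv)).continuousOn
    have hmaps : Set.MapsTo (fun t => ((t, g t, deriv g t) : ℝ × E n × E n))
        (Set.Icc (0:ℝ) 1) Ω := fun t ht => ⟨Set.mem_univ _, hgU t ht, Set.mem_univ _⟩
    have hD : ContinuousOn (fun t => fderiv ℝ f (t, g t, deriv g t)) (Set.Icc (0:ℝ) 1) :=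
      hDcont.comp hcurve hmaps
    set b := EuclideanSpace.basisFun (Fin n) ℝ with hbdef
    have hsum : ContinuousOn
        (fun t => ∑ i, (fderiv ℝ f (t, g t, deriv g t) (0, b i, 0)) • b i)
        (Set.Icc (0:ℝ) 1) := by
      refine continuousOn_finset_sum _ fun i _ => ContinuousOn.fun_smul ?_ continuousOn_const
      exact (ContinuousLinearMap.apply ℝ ℝ ((0, b i, 0) : ℝ × E n × E n)).continuous.comp_continuousOn hD
    refine hsum.congr fun t ht => ?_
    have : ∀ i, ⟪b i, A t⟫ = fderiv ℝ f (t, g t, deriv g t) (0, b i, 0) := by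
      intro i
      rw [real_inner_comm]
      exact key t (g t) (hgU t ht) (deriv g t) (b i)
    calc A t = ∑ i, ⟪b i, A t⟫ • b i := (b.sum_repr' (A t)).symm
      _ = ∑ i, (fderiv ℝ f (t, g t, deriv g t) (0, b i, 0)) • b i := by
          refine Finset.sum_congr rfl fun i _ => ?_; rw [this i]
  have hAint : Integrable A μ01 := hAcont.integrableOn_Icc
  have hAsm : AEStronglyMeasurable A μ01 := hAint.1
  -- fundamental theorem of calculus on [s,1]
  have hFTC : ∀ s ∈ Set.Icc (0:ℝ) 1, ∫ t in Set.Icc s 1, A t = B 1 - B s := by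
    intro s hs
    rw [integral_Icc_eq_integral_Ioc, ← intervalIntegral.integral_of_le hs.2]
    refine intervalIntegral.integral_eq_sub_of_hasDeriv_right_of_le hs.2
      (hBcont.mono (Set.Icc_subset_Icc hs.1 le_rfl)) ?_
      ((hAcont.mono (Set.Icc_subset_Icc hs.1 le_rfl)).intervalIntegrable_of_Icc hs.2)
    intro x hx
    have hx' : x ∈ Set.Icc (0:ℝ) 1 := ⟨hs.1.trans hx.1.le, hx.2.le⟩
    refine (hEL x hx').mono_of_mem_nhdsWithin ?_
    refine mem_nhdsWithin.mpr ⟨Set.Iio 1, isOpen_Iio, hx.2, ?_⟩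
    rintro y ⟨hy1, hy2⟩
    exact ⟨hx'.1.trans (le_of_lt hy2), le_of_lt hy1⟩
  have hAμ : ∫ t, A t ∂μ01 = B 1 - B 0 := by
    have h0 : ∫ t, A t ∂μ01 = ∫ t in Set.Icc (0:ℝ) 1, A t := rfl
    rw [h0]; exact hFTC 0 ⟨le_rfl, zero_le_one⟩
  -- the main computation
  intro ξ hξ
  set w : ℝ → E n := (ξ.2 : ℝ → E n) with hwdef
  have hw1 : Integrable w μ01 := (Lp.memLp ξ.2).integrable (by norm_num)
  have hwsm : AEStronglyMeasurable w μ01 := hw1.1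
  set G : ℝ → E n := fun t => ∫ s in Set.Ioc (0:ℝ) t, w s ∂μ01 with hGdef
  have hpathξ : ∀ t, pathH ξ t = ξ.1 + G t := fun t => rfl
  -- boundary values of pathH ξ
  have hpξ0 : pathH ξ 0 = ξ.1 := by
    simp [pathH, Set.Ioc_self]
  have hGw : ∫ s in Set.Ioc (0:ℝ) 1, w s ∂μ01 = ∫ s, w s ∂μ01 := by
    have h1 : (μ01 : Measure ℝ).restrict (Set.Ioc (0:ℝ) 1)
        = volume.restrict (Set.Ioc (0:ℝ) 1) := by
      rw [μ01, Measure.restrict_restrict measurableSet_Ioc,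
        Set.inter_eq_self_of_subset_left Set.Ioc_subset_Icc_self]
    have h2 : ∫ s, w s ∂μ01 = ∫ s in Set.Icc (0:ℝ) 1, w s := rfl
    rw [h1, h2, integral_Icc_eq_integral_Ioc]
  have hpξ1 : pathH ξ 1 = ξ.1 + ∫ s, w s ∂μ01 := by
    rw [hpathξ 1, hGdef]; exact congrArg _ hGw
  -- Fubini setup
  set S : Set (ℝ × ℝ) := {z | z.2 ∈ Set.Ioc 0 z.1} with hSdef
  have hSmeas : MeasurableSet S := by
    have : S = {z : ℝ × ℝ | 0 < z.2} ∩ {z : ℝ × ℝ | z.2 ≤ z.1} := by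
      ext z; simp [hSdef, Set.mem_Ioc, and_comm]
    rw [this]
    exact (measurableSet_lt measurable_const measurable_snd).inter
      (measurableSet_le measurable_snd measurable_fst)
  set F : ℝ × ℝ → ℝ := S.indicator (fun z => ⟪A z.1, w z.2⟫) with hFdef
  have hh2sm : AEStronglyMeasurable (fun z : ℝ × ℝ => ⟪A z.1, w z.2⟫) (μ01.prod μ01) :=
    AEStronglyMeasurable.inner hAsm.comp_fst hwsm.comp_snd
  have hbound : Integrable (fun z : ℝ × ℝ => ‖A z.1‖ * ‖w z.2‖) (μ01.prod μ01) :=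
    hAint.norm.mul_prod hw1.norm
  have hh2int : Integrable (fun z : ℝ × ℝ => ⟪A z.1, w z.2⟫) (μ01.prod μ01) := by
    refine hbound.mono' hh2sm (ae_of_all _ fun z => ?_)
    exact norm_inner_le_norm _ _
  have hFint : Integrable F (μ01.prod μ01) := hh2int.indicator hSmeas
  -- inner integral in t-variable
  have hstep : ∀ t : ℝ, ⟪A t, G t⟫ = ∫ s, F (t, s) ∂μ01 := by
    intro t
    have h1 : ⟪A t, G t⟫ = ∫ s in Set.Ioc (0:ℝ) t, ⟪A t, w s⟫ ∂μ01 :=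
      (integral_inner hw1.restrict (A t)).symm
    rw [h1, ← integral_indicator measurableSet_Ioc]
    refine integral_congr_ae (ae_of_all _ fun s => ?_)
    simp only [hFdef, Set.indicator_apply, hSdef, Set.mem_setOf_eq]
  -- integrabilities for assembly
  have iAξ : Integrable (fun t => ⟪A t, ξ.1⟫) μ01 := hAint.inner_const _
  have iAG : Integrable (fun t => ⟪A t, G t⟫) μ01 := by
    refine (hFint.integral_prod_left).congr (ae_of_all _ fun t => ?_)
    exact (hstep t).symm
  obtain ⟨C₁, hC₁⟩ := isCompact_Icc.exists_bound_of_continuousOn hBcont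
  have iBw : Integrable (fun t => ⟪B t, w t⟫) μ01 := by
    refine (hw1.norm.const_mul C₁).mono'
      (AEStronglyMeasurable.inner (hBcont.aestronglyMeasurable measurableSet_Icc) hwsm) ?_
    filter_upwards [ae_restrict_mem measurableSet_Icc] with t ht
    calc ‖⟪B t, w t⟫‖ ≤ ‖B t‖ * ‖w t‖ := norm_inner_le_norm _ _
      _ ≤ C₁ * ‖w t‖ := mul_le_mul_of_nonneg_right (hC₁ t ht) (norm_nonneg _)
  have iB1w : Integrable (fun s => ⟪B 1, w s⟫) μ01 := hw1.const_inner _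
  have iB1Bs : Integrable (fun s => ⟪B 1 - B s, w s⟫) μ01 := by
    have h : (fun s => ⟪B 1 - B s, w s⟫) = fun s => ⟪B 1, w s⟫ - ⟪B s, w s⟫ :=
      funext fun s => inner_sub_left _ _ _
    rw [h]; exact iB1w.sub iBw
  -- Fubini
  have hae01 : ∀ᵐ s ∂μ01, s ∈ Set.Ioc (0:ℝ) 1 := by
    have h1 : ∀ᵐ s ∂μ01, s ∈ Set.Icc (0:ℝ) 1 := ae_restrict_mem measurableSet_Icc
    have h2 : ∀ᵐ s ∂μ01, s ≠ 0 := by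
      refine ae_iff.mpr ?_
      have h3 : {a : ℝ | ¬ a ≠ 0} = {(0:ℝ)} := by ext a; simp
      rw [h3, μ01, Measure.restrict_apply (measurableSet_singleton 0)]
      exact measure_mono_null Set.inter_subset_left Real.volume_singleton
    filter_upwards [h1, h2] with s hs hs0
    exact ⟨lt_of_le_of_ne hs.1 (Ne.symm hs0), hs.2⟩
  have hswap : ∫ t, ⟪A t, G t⟫ ∂μ01 = ∫ s, ⟪B 1 - B s, w s⟫ ∂μ01 := by
    have h1 : ∫ t, ⟪A t, G t⟫ ∂μ01 = ∫ t, ∫ s, F (t, s) ∂μ01 ∂μ01 :=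
      integral_congr_ae (ae_of_all _ hstep)
    have h2 : ∫ t, ∫ s, F (t, s) ∂μ01 ∂μ01 = ∫ s, ∫ t, F (t, s) ∂μ01 ∂μ01 :=
      integral_integral_swap (by exact hFint)
    rw [h1, h2]
    refine integral_congr_ae ?_
    filter_upwards [hae01] with s hs
    have hFs : ∀ t : ℝ, F (t, s) = (Set.Ici s).indicator (fun t => ⟪A t, w s⟫) t := by
      intro t
      simp only [hFdef, Set.indicator_apply, hSdef, Set.mem_setOf_eq, Set.mem_Ioc,
        Set.mem_Ici]
      by_cases ht : s ≤ t
      · simp [ht, hs.1]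
      · simp [ht]
    have hIci : Set.Ici s ∩ Set.Icc (0:ℝ) 1 = Set.Icc s 1 := by
      ext x
      constructor
      · rintro ⟨h1x, h2x⟩; exact ⟨h1x, h2x.2⟩
      · rintro ⟨h1x, h2x⟩; exact ⟨h1x, hs.1.le.trans h1x, h2x⟩
    calc ∫ t, F (t, s) ∂μ01
        = ∫ t, (Set.Ici s).indicator (fun t => ⟪A t, w s⟫) t ∂μ01 :=
          integral_congr_ae (ae_of_all _ hFs)
      _ = ∫ t in Set.Ici s, ⟪A t, w s⟫ ∂μ01 := integral_indicator measurableSet_Ici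
      _ = ∫ t in Set.Icc s 1, ⟪A t, w s⟫ := by
          rw [μ01, Measure.restrict_restrict measurableSet_Ici, hIci]
      _ = ∫ t in Set.Icc s 1, ⟪w s, A t⟫ := by
          simp_rw [real_inner_comm]
      _ = ⟪w s, ∫ t in Set.Icc s 1, A t⟫ :=
          integral_inner (hAcont.mono (Set.Icc_subset_Icc hs.1.le le_rfl)).integrableOn_Icc _
      _ = ⟪B 1 - B s, w s⟫ := by rw [hFTC s ⟨hs.1.le, hs.2⟩, real_inner_comm]
  -- assemble
  have hbd' : ⟪B 0, pathH ξ 0⟫ = ⟪B 1, pathH ξ 1⟫ :=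
    hbd (pathH ξ 0) (pathH ξ 1) hξ
  have hcongr : dAct Lq Lv p ξ = ∫ t, (⟪A t, pathH ξ t⟫ + ⟪B t, w t⟫) ∂μ01 := by
    refine integral_congr_ae ?_
    filter_upwards [hp2, ae_restrict_mem measurableSet_Icc] with t htw ht
    rw [htw, hpath t ht]
  rw [hcongr]
  have hsplit : ∫ t, (⟪A t, pathH ξ t⟫ + ⟪B t, w t⟫) ∂μ01
      = (∫ t, ⟪A t, ξ.1⟫ ∂μ01) + (∫ t, ⟪A t, G t⟫ ∂μ01) + ∫ t, ⟪B t, w t⟫ ∂μ01 := by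
    have h1 : ∫ t, (⟪A t, pathH ξ t⟫ + ⟪B t, w t⟫) ∂μ01
        = ∫ t, ((⟪A t, ξ.1⟫ + ⟪A t, G t⟫) + ⟪B t, w t⟫) ∂μ01 := by
      refine integral_congr_ae (ae_of_all _ fun t => ?_)
      show ⟪A t, pathH ξ t⟫ + ⟪B t, w t⟫ = (⟪A t, ξ.1⟫ + ⟪A t, G t⟫) + ⟪B t, w t⟫
      rw [hpathξ t, inner_add_right]
    have h2 : ∫ t, ((⟪A t, ξ.1⟫ + ⟪A t, G t⟫) + ⟪B t, w t⟫) ∂μ01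
        = (∫ t, (⟪A t, ξ.1⟫ + ⟪A t, G t⟫) ∂μ01) + ∫ t, ⟪B t, w t⟫ ∂μ01 :=
      integral_add (iAξ.add iAG) iBw
    have h3 : ∫ t, (⟪A t, ξ.1⟫ + ⟪A t, G t⟫) ∂μ01
        = (∫ t, ⟪A t, ξ.1⟫ ∂μ01) + ∫ t, ⟪A t, G t⟫ ∂μ01 := integral_add iAξ iAG
    rw [h1, h2, h3]
  rw [hsplit, hswap]
  have hAξ : ∫ t, ⟪A t, ξ.1⟫ ∂μ01 = ⟪B 1 - B 0, ξ.1⟫ := by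
    calc ∫ t, ⟪A t, ξ.1⟫ ∂μ01 = ∫ t, ⟪ξ.1, A t⟫ ∂μ01 := by simp_rw [real_inner_comm]
      _ = ⟪ξ.1, ∫ t, A t ∂μ01⟫ := integral_inner hAint _
      _ = ⟪B 1 - B 0, ξ.1⟫ := by rw [hAμ, real_inner_comm]
  have hlast : (∫ s, ⟪B 1 - B s, w s⟫ ∂μ01) + ∫ t, ⟪B t, w t⟫ ∂μ01
      = ⟪B 1, ∫ s, w s ∂μ01⟫ := by
    calc (∫ s, ⟪B 1 - B s, w s⟫ ∂μ01) + ∫ t, ⟪B t, w t⟫ ∂μ01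
        = ∫ s, (⟪B 1 - B s, w s⟫ + ⟪B s, w s⟫) ∂μ01 := (integral_add iB1Bs iBw).symm
      _ = ∫ s, ⟪B 1, w s⟫ ∂μ01 := by
          refine integral_congr_ae (ae_of_all _ fun s => ?_)
          show ⟪B 1 - B s, w s⟫ + ⟪B s, w s⟫ = ⟪B 1, w s⟫
          rw [inner_sub_left, sub_add_cancel]
      _ = ⟪B 1, ∫ s, w s ∂μ01⟫ := integral_inner hw1 _
  rw [hAξ, add_assoc, hlast]
  have e0 : ⟪B 0, pathH ξ 0⟫ = ⟪B 0, ξ.1⟫ := by rw [hpξ0]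
  have e1 : ⟪B 1, pathH ξ 1⟫ = ⟪B 1, ξ.1⟫ + ⟪B 1, ∫ s, w s ∂μ01⟫ := by
    rw [hpξ1, inner_add_right]
  have : ⟪B 0, ξ.1⟫ = ⟪B 1, ξ.1⟫ + ⟪B 1, ∫ s, w s ∂μ01⟫ := by
    rw [← e0, ← e1]; exact hbd'
  rw [inner_sub_left]
  linarith [this]
end

section
/- (Palais–Smale condition, localized.) Let (x_h,w_h) be a sequence in 𝒪 ∩ H_W which is bounded in H, whose paths γ_h := γ_{x_h,w_h} converge uniformly on [0,1] to a continuous curve with image contained in U, and such that the dual norms ‖DS_L^W(x_h,w_h)‖ (the norm of the restriction of DS_L(x_h,w_h) to H_W) tend to 0. Then (x_h,w_h) converges strongly in H to some (x,w) ∈ 𝒪 ∩ H_W whose path γ_{x,w} is the uniform limit of the γ_h. -/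
open MeasureTheory Set Filter Topology ContDiff
open scoped RealInnerProductSpace

noncomputable section Helpers

open MeasureTheory Set Filter Topology ContDiff
open scoped RealInnerProductSpace

variable {n : ℕ}

instance : IsProbabilityMeasure (μ01) :=
  ⟨by rw [Measure.restrict_apply_univ]; simp [Real.volume_Icc]⟩

lemma integrable_norm_L2 (u : Lp (E n) 2 μ01) : Integrable (fun t => ‖u t‖) μ01 :=
  ((Lp.memLp u).integrable (by norm_num)).norm

lemma integrable_normSq_L2 (u : Lp (E n) 2 μ01) : Integrable (fun t => ‖u t‖ ^ 2) μ01 := by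
  have h := (Lp.memLp u).integrable_norm_rpow (p := 2) (by norm_num) (by norm_num)
  simpa [ENNReal.toReal_ofNat, Real.rpow_natCast] using h

lemma integral_normSq_L2 (u : Lp (E n) 2 μ01) : ∫ t, ‖u t‖ ^ 2 ∂μ01 = ‖u‖ ^ 2 := by
  have h1 : (‖u‖ : ℝ) ^ 2 = ⟪u, u⟫ := (real_inner_self_eq_norm_sq u).symm
  rw [h1, MeasureTheory.L2.inner_def]
  exact integral_congr_ae (Eventually.of_forall fun t => (real_inner_self_eq_norm_sq _).symm)

lemma setIntegral_norm_le (u : Lp (E n) 2 μ01) {S : Set ℝ} (hS : MeasurableSet S)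
    {a : ℝ} (ha : 0 < a) :
    ∫ t in S, ‖u t‖ ∂μ01 ≤ (a * ‖u‖ ^ 2 + (μ01 S).toReal / a) / 2 := by
  have hbound : ∀ t : ℝ, ‖u t‖ ≤ (a * ‖u t‖ ^ 2 + 1 / a) / 2 := by
    intro t
    have hkey : (a * ‖u t‖ ^ 2 + 1 / a) / 2 - ‖u t‖ = (a * ‖u t‖ - 1) ^ 2 / (2 * a) := by
      field_simp; ring
    have h2 : (0:ℝ) ≤ (a * ‖u t‖ - 1) ^ 2 / (2 * a) :=
      div_nonneg (sq_nonneg _) (by linarith)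
    linarith
  have hint1 : Integrable (fun t => (a * ‖u t‖ ^ 2 + 1 / a) / 2) (μ01.restrict S) :=
    ((((integrable_normSq_L2 u).const_mul a).add (integrable_const _)).div_const 2).restrict
  have h2 : ∫ t in S, ‖u t‖ ∂μ01 ≤ ∫ t in S, (a * ‖u t‖ ^ 2 + 1 / a) / 2 ∂μ01 :=
    integral_mono ((integrable_norm_L2 u).restrict) hint1 hbound
  refine h2.trans ?_
  rw [integral_div, integral_add (((integrable_normSq_L2 u).const_mul a).restrict)
    (integrable_const _), integral_const_mul, setIntegral_const]
  have h3 : ∫ t in S, ‖u t‖ ^ 2 ∂μ01 ≤ ‖u‖ ^ 2 := by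
    rw [← integral_normSq_L2 u]
    exact setIntegral_le_integral (integrable_normSq_L2 u)
      (Eventually.of_forall fun t => sq_nonneg _)
  have h4 : μ01.real S • (1 / a) = (μ01 S).toReal / a := by
    rw [smul_eq_mul, mul_one_div]; rfl
  rw [h4]
  have : a * ∫ t in S, ‖u t‖ ^ 2 ∂μ01 ≤ a * ‖u‖ ^ 2 := by
    exact mul_le_mul_of_nonneg_left h3 ha.le
  linarith

lemma integral_norm_L2_le (u : Lp (E n) 2 μ01) : ∫ t, ‖u t‖ ∂μ01 ≤ ‖u‖ := by
  by_cases hu0 : u = 0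
  · have hcoe : (u : ℝ → E n) =ᵐ[μ01] 0 := by rw [hu0]; exact Lp.coeFn_zero _ _ _
    have heq : (fun t => ‖(u : ℝ → E n) t‖) =ᵐ[μ01] (fun _ => (0:ℝ)) :=
      hcoe.mono fun t ht => by simp [ht]
    rw [integral_congr_ae heq]; simp
  · have h0 : (0:ℝ) < ‖u‖ := norm_pos_iff.mpr hu0
    have h := setIntegral_norm_le u (MeasurableSet.univ) (a := 1 / ‖u‖) (by positivity)
    rw [Measure.restrict_univ] at h
    refine h.trans ?_
    have hμ : (μ01 (univ : Set ℝ)).toReal = 1 := by simp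
    rw [hμ]
    have : (1 / ‖u‖ * ‖u‖ ^ 2 + 1 / (1 / ‖u‖)) / 2 = ‖u‖ := by
      field_simp; ring
    rw [this]

end Helpers

noncomputable section Helpers2

open MeasureTheory Set Filter Topology ContDiff
open scoped RealInnerProductSpace

variable {n : ℕ}

lemma pathH_sub (p q : Hsp n) (t : ℝ) (ht : t ∈ Set.Icc (0:ℝ) 1) :
    pathH (p - q) t = pathH p t - pathH q t := by
  have h : p - q = p + (-1 : ℝ) • q := by rw [neg_one_smul, ← sub_eq_add_neg]
  rw [h, pathH_add p ((-1:ℝ) • q) t ht, pathH_smul (-1) q t ht, neg_one_smul,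
    ← sub_eq_add_neg]

lemma pathH_zero_eq (p : Hsp n) : pathH p 0 = p.1 := by
  simp [pathH]

lemma norm_pathH_le (p : Hsp n) (t : ℝ) : ‖pathH p t‖ ≤ ‖p.1‖ + ‖p.2‖ := by
  refine (norm_add_le _ _).trans (add_le_add le_rfl ?_)
  refine (norm_integral_le_integral_norm _).trans ?_
  refine (setIntegral_le_integral (integrable_norm_L2 p.2)
    (Eventually.of_forall fun t => norm_nonneg _)).trans ?_
  exact integral_norm_L2_le p.2

lemma norm_pathH_sub_le (p q : Hsp n) (t : ℝ) (ht : t ∈ Set.Icc (0:ℝ) 1) :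
    ‖pathH p t - pathH q t‖ ≤ ‖p.1 - q.1‖ + ‖p.2 - q.2‖ := by
  rw [← pathH_sub p q t ht]
  exact norm_pathH_le (p - q) t

lemma pathH_dist (p : Hsp n) {t₁ t₂ : ℝ} (h : t₁ ≤ t₂) {a : ℝ} (ha : 0 < a) :
    ‖pathH p t₂ - pathH p t₁‖ ≤ (a * ‖p.2‖ ^ 2 + (t₂ - t₁) / a) / 2 := by
  have hsub : Set.Ioc (0:ℝ) t₁ ⊆ Set.Ioc (0:ℝ) t₂ := Set.Ioc_subset_Ioc_right h
  have hS : pathH p t₂ - pathH p t₁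
      = ∫ s in Set.Ioc (0:ℝ) t₂ \ Set.Ioc (0:ℝ) t₁, p.2 s ∂μ01 := by
    rw [integral_diff measurableSet_Ioc
      ((Lp.memLp p.2).integrable (by norm_num)).integrableOn hsub]
    simp [pathH]
  rw [hS]
  refine (norm_integral_le_integral_norm _).trans ?_
  refine (setIntegral_norm_le p.2 (measurableSet_Ioc.diff measurableSet_Ioc) ha).trans ?_
  have hμ : (μ01 (Set.Ioc (0:ℝ) t₂ \ Set.Ioc (0:ℝ) t₁)).toReal ≤ t₂ - t₁ := by
    have h1 : Set.Ioc (0:ℝ) t₂ \ Set.Ioc (0:ℝ) t₁ ⊆ Set.Ioc t₁ t₂ := by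
      rintro x ⟨⟨hx1, hx2⟩, hx3⟩
      refine ⟨?_, hx2⟩
      by_contra hc
      exact hx3 ⟨hx1, not_lt.mp hc⟩
    have h2 : μ01 (Set.Ioc (0:ℝ) t₂ \ Set.Ioc (0:ℝ) t₁) ≤ volume (Set.Ioc t₁ t₂) :=
      le_trans (Measure.restrict_le_self _) (measure_mono h1)
    rw [Real.volume_Ioc] at h2
    calc (μ01 (Set.Ioc (0:ℝ) t₂ \ Set.Ioc (0:ℝ) t₁)).toReal
        ≤ (ENNReal.ofReal (t₂ - t₁)).toReal :=
          ENNReal.toReal_mono ENNReal.ofReal_ne_top h2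
      _ ≤ t₂ - t₁ := by rw [ENNReal.toReal_ofReal_eq_iff.mpr (by linarith)]
  have h3 : (μ01 (Set.Ioc (0:ℝ) t₂ \ Set.Ioc (0:ℝ) t₁)).toReal / a ≤ (t₂ - t₁) / a := by
    gcongr
  linarith

lemma continuous_pathH (p : Hsp n) : Continuous (pathH p) := by
  rw [Metric.continuous_iff]
  intro t₀ ε hε
  set B : ℝ := ‖p.2‖ ^ 2 + 1 with hB
  have hBpos : 0 < B := by positivity
  set a : ℝ := ε / B with haa
  have hapos : 0 < a := by positivity
  refine ⟨ε * a / 2, by positivity, fun t ht => ?_⟩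
  have key : ∀ s₁ s₂ : ℝ, s₁ ≤ s₂ → s₂ - s₁ < ε * a / 2 →
      ‖pathH p s₂ - pathH p s₁‖ < ε := by
    intro s₁ s₂ hle hlt
    refine lt_of_le_of_lt (pathH_dist p hle hapos) ?_
    have h1 : a * ‖p.2‖ ^ 2 ≤ ε := by
      calc a * ‖p.2‖ ^ 2 ≤ a * B := by nlinarith [sq_nonneg ‖p.2‖]
        _ = ε := by rw [haa]; field_simp
    have h2 : (s₂ - s₁) / a < ε / 2 := by
      rw [div_lt_iff₀ hapos]
      calc s₂ - s₁ < ε * a / 2 := hlt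
        _ = ε / 2 * a := by ring
    linarith
  rw [Real.dist_eq] at ht
  have habs := abs_lt.mp ht
  rcases le_total t t₀ with hc | hc
  · rw [dist_eq_norm, norm_sub_rev]
    exact key t t₀ hc (by linarith [habs.1])
  · rw [dist_eq_norm]
    exact key t₀ t hc (by linarith [habs.2])

end Helpers2

noncomputable section Helpers3

open MeasureTheory Set Filter Topology ContDiff
open scoped RealInnerProductSpace

variable {n : ℕ}

/-- inclusion `e ↦ (0,e,0)` -/
def ιq (n : ℕ) : E n →L[ℝ] ℝ × E n × E n :=
  (0 : E n →L[ℝ] ℝ).prod ((ContinuousLinearMap.id ℝ (E n)).prod 0)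

/-- inclusion `e ↦ (0,0,e)` -/
def ιv (n : ℕ) : E n →L[ℝ] ℝ × E n × E n :=
  (0 : E n →L[ℝ] ℝ).prod ((0 : E n →L[ℝ] E n).prod (ContinuousLinearMap.id ℝ (E n)))

lemma grad_continuousOn {U : Set (E n)} (hU : IsOpen U)
    {L : ℝ → E n → E n → ℝ} {G : ℝ → E n → E n → E n}
    (hL : ContDiffOn ℝ ∞ (fun z : ℝ × E n × E n => L z.1 z.2.1 z.2.2)
      (Set.univ ×ˢ U ×ˢ Set.univ))
    (ι : E n →L[ℝ] ℝ × E n × E n)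
    (hbase : ∀ (t : ℝ) (q v e : E n),
      ((t, q, v) : ℝ × E n × E n) + ι e
        = (t, q + (ι e).2.1, v + (ι e).2.2) ∧ (ι e).1 = 0)
    (hG : ∀ (t : ℝ), ∀ q ∈ U, ∀ v : E n,
      HasGradientAt (fun e : E n => L t (q + (ι e).2.1) (v + (ι e).2.2)) (G t q v) 0) :
    ContinuousOn (fun z : ℝ × E n × E n => G z.1 z.2.1 z.2.2)
      (Set.univ ×ˢ U ×ˢ Set.univ) := by
  set F : ℝ × E n × E n → ℝ := fun z => L z.1 z.2.1 z.2.2 with hF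
  set O : Set (ℝ × E n × E n) := Set.univ ×ˢ U ×ˢ Set.univ with hOdef
  have hO : IsOpen O := isOpen_univ.prod (hU.prod isOpen_univ)
  have h1 : (1 : WithTop ℕ∞) ≤ ∞ := by exact_mod_cast le_top
  have hfd : ContinuousOn (fderiv ℝ F) O := hL.continuousOn_fderiv_of_isOpen hO h1
  have hrepr : ∀ z ∈ O, G z.1 z.2.1 z.2.2
      = (InnerProductSpace.toDual ℝ (E n)).symm ((fderiv ℝ F z).comp ι) := by
    rintro ⟨t, q, v⟩ hz
    have hqU : q ∈ U := hz.2.1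
    have hdF : HasFDerivAt F (fderiv ℝ F (t, q, v)) (t, q, v) :=
      ((hL.differentiableOn (by simp)).differentiableAt (hO.mem_nhds hz)).hasFDerivAt
    have hincl : HasFDerivAt (fun e : E n => ((t, q, v) : ℝ × E n × E n) + ι e) ι 0 :=
      (ι.hasFDerivAt).const_add _
    have hcomp0 : HasFDerivAt (fun e : E n => F (((t, q, v) : ℝ × E n × E n) + ι e))
        ((fderiv ℝ F (t, q, v)).comp ι) 0 := by
      have hdF' : HasFDerivAt F (fderiv ℝ F (t, q, v)) ((t, q, v) + ι 0) := by
        simpa using hdF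
      exact hdF'.comp (0 : E n) hincl
    have hcomp : HasFDerivAt (fun e : E n => L t (q + (ι e).2.1) (v + (ι e).2.2))
        ((fderiv ℝ F (t, q, v)).comp ι) 0 := by
      refine hcomp0.congr_of_eventuallyEq (Eventually.of_forall fun e => ?_)
      show L t (q + (ι e).2.1) (v + (ι e).2.2) = F ((t, q, v) + ι e)
      rw [(hbase t q v e).1]
    have huniq : InnerProductSpace.toDual ℝ (E n) (G t q v)
        = (fderiv ℝ F (t, q, v)).comp ι :=
      ((hG t q hqU v).hasFDerivAt).unique hcomp
    calc G t q v
        = (InnerProductSpace.toDual ℝ (E n)).symm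
            (InnerProductSpace.toDual ℝ (E n) (G t q v)) := by
          rw [LinearIsometryEquiv.symm_apply_apply]
      _ = _ := by rw [huniq]
  refine ContinuousOn.congr ?_ hrepr
  have hc1 : Continuous fun A : (ℝ × E n × E n) →L[ℝ] ℝ => A.comp ι :=
    ((ContinuousLinearMap.compSL (E n) (ℝ × E n × E n) ℝ (RingHom.id ℝ)
      (RingHom.id ℝ)).flip ι).continuous
  exact ((InnerProductSpace.toDual ℝ (E n)).symm.continuous.comp hc1).comp_continuousOn hfd

end Helpers3

noncomputable section Helpers4

open MeasureTheory Set Filter Topology ContDiff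
open scoped RealInnerProductSpace

variable {n : ℕ}

lemma Lq_contOn {U : Set (E n)} (hU : IsOpen U)
    {L : ℝ → E n → E n → ℝ} {Lq : ℝ → E n → E n → E n}
    (hL : ContDiffOn ℝ ∞ (fun z : ℝ × E n × E n => L z.1 z.2.1 z.2.2)
      (Set.univ ×ˢ U ×ˢ Set.univ))
    (hLq : ∀ (t : ℝ), ∀ q ∈ U, ∀ v : E n, HasGradientAt (fun q' => L t q' v) (Lq t q v) q) :
    ContinuousOn (fun z : ℝ × E n × E n => Lq z.1 z.2.1 z.2.2)
      (Set.univ ×ˢ U ×ˢ Set.univ) := by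
  refine grad_continuousOn hU hL (ιq n) (fun t q v e => ?_) (fun t q hq v => ?_)
  · refine ⟨?_, rfl⟩
    simp [ιq, Prod.ext_iff]
  · have h := (hLq t q hq v).hasFDerivAt
    have htr : HasFDerivAt (fun e : E n => q + e) (ContinuousLinearMap.id ℝ (E n)) 0 :=
      (ContinuousLinearMap.id ℝ (E n)).hasFDerivAt.const_add q
    have h' : HasFDerivAt (fun q' => L t q' v)
        ((InnerProductSpace.toDual ℝ (E n)) (Lq t q v)) (q + (ContinuousLinearMap.id ℝ (E n)) 0) := by
      simpa using h
    have hc := h'.comp (0 : E n) htr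
    rw [hasGradientAt_iff_hasFDerivAt]
    have : (fun e : E n => L t (q + (ιq n e).2.1) (v + (ιq n e).2.2))
        = fun e : E n => L t (q + e) v := by
      funext e; simp [ιq]
    rw [this]
    simpa [Function.comp_def] using hc

lemma Lv_contOn {U : Set (E n)} (hU : IsOpen U)
    {L : ℝ → E n → E n → ℝ} {Lv : ℝ → E n → E n → E n}
    (hL : ContDiffOn ℝ ∞ (fun z : ℝ × E n × E n => L z.1 z.2.1 z.2.2)
      (Set.univ ×ˢ U ×ˢ Set.univ))
    (hLv : ∀ (t : ℝ), ∀ q ∈ U, ∀ v : E n, HasGradientAt (fun v' => L t q v') (Lv t q v) v) :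
    ContinuousOn (fun z : ℝ × E n × E n => Lv z.1 z.2.1 z.2.2)
      (Set.univ ×ˢ U ×ˢ Set.univ) := by
  refine grad_continuousOn hU hL (ιv n) (fun t q v e => ?_) (fun t q hq v => ?_)
  · refine ⟨?_, rfl⟩
    simp [ιv, Prod.ext_iff]
  · have h := (hLv t q hq v).hasFDerivAt
    have htr : HasFDerivAt (fun e : E n => v + e) (ContinuousLinearMap.id ℝ (E n)) 0 :=
      (ContinuousLinearMap.id ℝ (E n)).hasFDerivAt.const_add v
    have h' : HasFDerivAt (fun v' => L t q v')
        ((InnerProductSpace.toDual ℝ (E n)) (Lv t q v)) (v + (ContinuousLinearMap.id ℝ (E n)) 0) := by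
      simpa using h
    have hc := h'.comp (0 : E n) htr
    rw [hasGradientAt_iff_hasFDerivAt]
    have : (fun e : E n => L t (q + (ιv n e).2.1) (v + (ιv n e).2.2))
        = fun e : E n => L t q (v + e) := by
      funext e; simp [ιv]
    rw [this]
    simpa [Function.comp_def] using hc

lemma comp_pathH_aesm {U : Set (E n)} (hU : IsOpen U)
    {Φ : ℝ × E n × E n → E n}
    (hΦ : ContinuousOn Φ (Set.univ ×ˢ U ×ˢ Set.univ))
    {γ : ℝ → E n} (hγ : Continuous γ) (hγU : ∀ t ∈ Set.Icc (0:ℝ) 1, γ t ∈ U)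
    (w : Lp (E n) 2 μ01) :
    AEStronglyMeasurable (fun t => Φ (t, γ t, w t)) μ01 := by
  classical
  set O : Set (ℝ × E n × E n) := Set.univ ×ˢ U ×ˢ Set.univ with hOdef
  have hO : IsOpen O := isOpen_univ.prod (hU.prod isOpen_univ)
  set Φ' : ℝ × E n × E n → E n := O.piecewise Φ (fun _ => 0) with hΦ'def
  have hmeas : Measurable Φ' :=
    hΦ.measurable_piecewise continuousOn_const hO.measurableSet
  have hw := Lp.aestronglyMeasurable w
  set w' : ℝ → E n := hw.mk _ with hw'def
  have hww' : (w : ℝ → E n) =ᵐ[μ01] w' := hw.ae_eq_mk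
  have hm : Measurable fun t => Φ' (t, γ t, w' t) :=
    hmeas.comp (measurable_id.prodMk (hγ.measurable.prodMk
      hw.stronglyMeasurable_mk.measurable))
  refine hm.aestronglyMeasurable.congr ?_
  have hIcc : ∀ᵐ t ∂μ01, t ∈ Set.Icc (0:ℝ) 1 := ae_restrict_mem measurableSet_Icc
  filter_upwards [hIcc, hww'] with t ht hwt
  have hmem : ((t, γ t, (w : ℝ → E n) t) : ℝ × E n × E n) ∈ O :=
    ⟨Set.mem_univ _, hγU t ht, Set.mem_univ _⟩
  calc Φ' (t, γ t, w' t) = Φ' (t, γ t, (w : ℝ → E n) t) := by rw [hwt]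
    _ = Φ (t, γ t, (w : ℝ → E n) t) := Set.piecewise_eq_of_mem _ _ _ hmem

end Helpers4

noncomputable section Helpers5

open MeasureTheory Set Filter Topology ContDiff
open scoped RealInnerProductSpace

variable {n : ℕ}

lemma conv_lower {U : Set (E n)} {Lv : ℝ → E n → E n → E n}
    {Lvv : ℝ → E n → E n → (E n →L[ℝ] E n)}
    (hLvv : ∀ (t : ℝ), ∀ q ∈ U, ∀ v : E n,
      HasFDerivAt (fun v' => Lv t q v') (Lvv t q v) v)
    {ℓ₂ : ℝ}
    (hL2 : ∀ t ∈ Set.Icc (0:ℝ) 1, ∀ q ∈ U, ∀ v ξ : E n, ℓ₂ * ‖ξ‖ ^ 2 ≤ ⟪Lvv t q v ξ, ξ⟫)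
    {t : ℝ} (ht : t ∈ Set.Icc (0:ℝ) 1) {q : E n} (hq : q ∈ U) (v₁ v₂ : E n) :
    ℓ₂ * ‖v₁ - v₂‖ ^ 2 ≤ ⟪Lv t q v₁ - Lv t q v₂, v₁ - v₂⟫ := by
  set d : E n := v₁ - v₂ with hd
  set φ : ℝ → ℝ := fun s => ⟪Lv t q (v₂ + s • d), d⟫ - s * (ℓ₂ * ‖d‖ ^ 2) with hφdef
  have hφ : ∀ s : ℝ, HasDerivAt φ (⟪Lvv t q (v₂ + s • d) d, d⟫ - ℓ₂ * ‖d‖ ^ 2) s := by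
    intro s
    have hc : HasDerivAt (fun s : ℝ => v₂ + s • d) d s := by
      simpa using ((hasDerivAt_id s).smul_const d).const_add v₂
    have h1 : HasDerivAt (fun s : ℝ => Lv t q (v₂ + s • d)) (Lvv t q (v₂ + s • d) d) s :=
      (hLvv t q hq (v₂ + s • d)).comp_hasDerivAt s hc
    have h2 := h1.inner (𝕜 := ℝ) (hasDerivAt_const s d)
    simp only [inner_zero_right, add_zero] at h2
    have h3 : HasDerivAt (fun s : ℝ => s * (ℓ₂ * ‖d‖ ^ 2)) (ℓ₂ * ‖d‖ ^ 2) s := by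
      simpa using (hasDerivAt_id s).mul_const (ℓ₂ * ‖d‖ ^ 2)
    have h4 := h2.sub h3
    simp at h4
    exact h4
  have hmono : Monotone φ := by
    refine monotone_of_deriv_nonneg (fun s => (hφ s).differentiableAt) (fun s => ?_)
    rw [(hφ s).deriv]
    have := hL2 t ht q hq (v₂ + s • d) d
    linarith
  have h01 := hmono (by norm_num : (0:ℝ) ≤ 1)
  have hφ0 : φ 0 = ⟪Lv t q v₂, d⟫ := by simp [hφdef]
  have hφ1 : φ 1 = ⟪Lv t q v₁, d⟫ - ℓ₂ * ‖d‖ ^ 2 := by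
    simp [hφdef, hd]
  rw [hφ0, hφ1] at h01
  rw [inner_sub_left]
  linarith

lemma mvt_bound {f : E n → E n} {f' : E n → E n →L[ℝ] E n} {s : Set (E n)}
    (hconv : Convex ℝ s) (hd : ∀ x ∈ s, HasFDerivAt f (f' x) x) {C : ℝ}
    (hb : ∀ x ∈ s, ‖f' x‖ ≤ C) {x y : E n} (hx : x ∈ s) (hy : y ∈ s) :
    ‖f y - f x‖ ≤ C * ‖y - x‖ :=
  hconv.norm_image_sub_le_of_norm_hasFDerivWithin_le
    (fun z hz => (hd z hz).hasFDerivWithinAt) hb hx hy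

end Helpers5
set_option maxHeartbeats 3200000

/-- (Palais–Smale, localized.) A bounded sequence in `𝒪 ∩ H_W` whose paths
converge uniformly to a curve in `U` and along which the dual norm of `DS_L^W` tends to zero
converges strongly in `H` to an element of `𝒪 ∩ H_W` whose path is the uniform limit. -/
theorem palais_smale_localized
    {n : ℕ} (U : Set (E n)) (hU : IsOpen U)
    (L : ℝ → E n → E n → ℝ)
    (Lq Lv : ℝ → E n → E n → E n)
    (Lvv Lqv Lvq Lqq : ℝ → E n → E n → (E n →L[ℝ] E n))
    (hL : ContDiffOn ℝ ∞ (fun z : ℝ × E n × E n => L z.1 z.2.1 z.2.2)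
      (Set.univ ×ˢ U ×ˢ Set.univ))
    (hLq : ∀ (t : ℝ), ∀ q ∈ U, ∀ v : E n, HasGradientAt (fun q' => L t q' v) (Lq t q v) q)
    (hLv : ∀ (t : ℝ), ∀ q ∈ U, ∀ v : E n, HasGradientAt (fun v' => L t q v') (Lv t q v) v)
    (hLvv : ∀ (t : ℝ), ∀ q ∈ U, ∀ v : E n, HasFDerivAt (fun v' => Lv t q v') (Lvv t q v) v)
    (hLqv : ∀ (t : ℝ), ∀ q ∈ U, ∀ v : E n, HasFDerivAt (fun q' => Lv t q' v) (Lqv t q v) q)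
    (hLvq : ∀ (t : ℝ), ∀ q ∈ U, ∀ v : E n, HasFDerivAt (fun v' => Lq t q v') (Lvq t q v) v)
    (hLqq : ∀ (t : ℝ), ∀ q ∈ U, ∀ v : E n, HasFDerivAt (fun q' => Lq t q' v) (Lqq t q v) q)
    (ℓ₁ : ℝ) (hℓ₁ : 0 < ℓ₁)
    (hL1 : ∀ t ∈ Set.Icc (0:ℝ) 1, ∀ q ∈ U, ∀ v : E n,
      ‖Lvv t q v‖ ≤ ℓ₁ ∧ ‖Lqv t q v‖ ≤ ℓ₁ * (1 + ‖v‖) ∧ ‖Lvq t q v‖ ≤ ℓ₁ * (1 + ‖v‖)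
        ∧ ‖Lqq t q v‖ ≤ ℓ₁ * (1 + ‖v‖ ^ 2))
    (ℓ₂ : ℝ) (hℓ₂ : 0 < ℓ₂)
    (hL2 : ∀ t ∈ Set.Icc (0:ℝ) 1, ∀ q ∈ U, ∀ v ξ : E n, ℓ₂ * ‖ξ‖ ^ 2 ≤ ⟪Lvv t q v ξ, ξ⟫)
    (C₀ : ℝ) (hC₀ : ∀ t ∈ Set.Icc (0:ℝ) 1, ∀ q ∈ U, ‖Lq t q 0‖ ≤ C₀ ∧ ‖Lv t q 0‖ ≤ C₀)
    (W : Submodule ℝ (E n × E n)) (ps : ℕ → Hsp n)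
    (hpsO : ∀ h, ps h ∈ actO U) (hpsW : ∀ h, ps h ∈ HWsub W)
    (R : ℝ) (hR : ∀ h, ‖ps h‖ ≤ R)
    (g : ℝ → E n) (hgC : ContinuousOn g (Set.Icc (0:ℝ) 1))
    (hgU : ∀ t ∈ Set.Icc (0:ℝ) 1, g t ∈ U)
    (hunif : TendstoUniformlyOn (fun h t => pathH (ps h) t) g atTop (Set.Icc (0:ℝ) 1))
    (hsmall : ∀ ε > (0:ℝ), ∃ N : ℕ, ∀ h ≥ N, ∀ ξ : Hsp n, ξ ∈ HWsub W →
      |dAct Lq Lv (ps h) ξ| ≤ ε * ‖ξ‖) :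
    ∃ p : Hsp n, p ∈ actO U ∧ p ∈ HWsub W ∧ Tendsto ps atTop (𝓝 p) ∧
      ∀ t ∈ Set.Icc (0:ℝ) 1, pathH p t = g t := by
  classical
  have h0I : (0:ℝ) ∈ Set.Icc (0:ℝ) 1 := by norm_num
  have h1I : (1:ℝ) ∈ Set.Icc (0:ℝ) 1 := by norm_num
  have hC₀nn : 0 ≤ C₀ := le_trans (norm_nonneg _) (hC₀ 0 h0I (g 0) (hgU 0 h0I)).1
  have hRnn : (0:ℝ) ≤ R := le_trans (norm_nonneg _) (hR 0)
  have hwR : ∀ a : ℕ, ‖(ps a).2‖ ≤ R := fun a => le_trans (norm_snd_le _) (hR a)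
  have hIsq : ∀ a : ℕ, ∫ t, ‖((ps a).2 : ℝ → E n) t‖ ^ 2 ∂μ01 ≤ R ^ 2 := by
    intro a
    rw [integral_normSq_L2]
    exact pow_le_pow_left₀ (norm_nonneg _) (hwR a) 2
  have hInorm : ∀ a : ℕ, ∫ t, ‖((ps a).2 : ℝ → E n) t‖ ∂μ01 ≤ R :=
    fun a => le_trans (integral_norm_L2_le _) (hwR a)
  have hQcont := Lq_contOn hU hL hLq
  have hVcont := Lv_contOn hU hL hLv
  have haesmQ : ∀ a b : ℕ,
      AEStronglyMeasurable (fun t => Lq t (pathH (ps a) t) (((ps b).2 : ℝ → E n) t)) μ01 :=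
    fun a b => comp_pathH_aesm hU hQcont (continuous_pathH (ps a)) (hpsO a) (ps b).2
  have haesmV : ∀ a b : ℕ,
      AEStronglyMeasurable (fun t => Lv t (pathH (ps a) t) (((ps b).2 : ℝ → E n) t)) μ01 :=
    fun a b => comp_pathH_aesm hU hVcont (continuous_pathH (ps a)) (hpsO a) (ps b).2
  -- pointwise growth bounds
  have hBv : ∀ t ∈ Set.Icc (0:ℝ) 1, ∀ q ∈ U, ∀ v : E n, ‖Lv t q v‖ ≤ C₀ + ℓ₁ * ‖v‖ := by
    intro t ht q hq v
    have hmvt := mvt_bound (convex_closedBall (0 : E n) ‖v‖)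
      (fun x _ => hLvv t q hq x) (fun x _ => (hL1 t ht q hq x).1)
      (Metric.mem_closedBall_self (norm_nonneg v)) (mem_closedBall_zero_iff.mpr le_rfl)
    rw [sub_zero] at hmvt
    have h0 := (hC₀ t ht q hq).2
    have hsplit : Lv t q v = Lv t q 0 + (Lv t q v - Lv t q 0) := by abel
    calc ‖Lv t q v‖ ≤ ‖Lv t q 0‖ + ‖Lv t q v - Lv t q 0‖ := by
          rw [hsplit]; exact (norm_add_le _ _).trans (by rw [← hsplit])
      _ ≤ C₀ + ℓ₁ * ‖v‖ := by linarith
  have hBq : ∀ t ∈ Set.Icc (0:ℝ) 1, ∀ q ∈ U, ∀ v : E n,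
      ‖Lq t q v‖ ≤ C₀ + ℓ₁ * (‖v‖ + ‖v‖ ^ 2) := by
    intro t ht q hq v
    have hmvt := mvt_bound (convex_closedBall (0 : E n) ‖v‖)
      (fun x _ => hLvq t q hq x)
      (C := ℓ₁ * (1 + ‖v‖)) (fun x hx => by
        have h1 := (hL1 t ht q hq x).2.2.1
        have h2 : ‖x‖ ≤ ‖v‖ := mem_closedBall_zero_iff.mp hx
        nlinarith [hℓ₁.le])
      (Metric.mem_closedBall_self (norm_nonneg v)) (mem_closedBall_zero_iff.mpr le_rfl)
    rw [sub_zero] at hmvt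
    have h0 := (hC₀ t ht q hq).1
    have hsplit : Lq t q v = Lq t q 0 + (Lq t q v - Lq t q 0) := by abel
    calc ‖Lq t q v‖ ≤ ‖Lq t q 0‖ + ‖Lq t q v - Lq t q 0‖ := by
          rw [hsplit]; exact (norm_add_le _ _).trans (by rw [← hsplit])
      _ ≤ C₀ + ℓ₁ * (‖v‖ + ‖v‖ ^ 2) := by nlinarith [norm_nonneg v, hℓ₁.le]
  -- uniform ball radius inside U around the limit curve
  obtain ⟨ρ, hρpos, hρsub⟩ :=
    (isCompact_Icc.image_of_continuousOn hgC).exists_thickening_subset_open hU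
      (by rintro x ⟨t, ht, rfl⟩; exact hgU t ht)
  have hball : ∀ t ∈ Set.Icc (0:ℝ) 1, Metric.ball (g t) ρ ⊆ U :=
    fun t ht => (Metric.ball_subset_thickening (Set.mem_image_of_mem g ht) ρ).trans hρsub
  have hLip : ∀ t ∈ Set.Icc (0:ℝ) 1, ∀ v : E n, ∀ x ∈ Metric.ball (g t) ρ,
      ∀ y ∈ Metric.ball (g t) ρ, ‖Lv t x v - Lv t y v‖ ≤ ℓ₁ * (1 + ‖v‖) * ‖x - y‖ := by
    intro t ht v x hx y hy
    exact mvt_bound (convex_ball _ _) (fun z hz => hLqv t z (hball t ht hz) v)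
      (fun z hz => (hL1 t ht z (hball t ht hz) v).2.1) hy hx
  -- integrability of the relevant integrands
  have hintΔsq : ∀ c d : ℕ, Integrable
      (fun t => ‖((ps c).2 : ℝ → E n) t - ((ps d).2 : ℝ → E n) t‖ ^ 2) μ01 := by
    intro c d
    refine (integrable_normSq_L2 ((ps c).2 - (ps d).2)).congr ?_
    filter_upwards [Lp.coeFn_sub (ps c).2 (ps d).2] with t ht
    rw [ht]; simp
  have hintV : ∀ a b c d : ℕ, Integrable (fun t =>
      ⟪Lv t (pathH (ps a) t) (((ps b).2 : ℝ → E n) t),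
        ((ps c).2 : ℝ → E n) t - ((ps d).2 : ℝ → E n) t⟫) μ01 := by
    intro a b c d
    have hG : Integrable (fun t => (C₀ + ℓ₁) * (1 + ‖((ps b).2 : ℝ → E n) t‖ ^ 2
        + 2 * ‖((ps c).2 : ℝ → E n) t‖ ^ 2 + 2 * ‖((ps d).2 : ℝ → E n) t‖ ^ 2)) μ01 := by
      refine Integrable.const_mul ?_ _
      exact (((integrable_const 1).add (integrable_normSq_L2 (ps b).2)).add
        ((integrable_normSq_L2 (ps c).2).const_mul 2)).add
        ((integrable_normSq_L2 (ps d).2).const_mul 2)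
    refine Integrable.mono' hG ((haesmV a b).inner
      (((Lp.aestronglyMeasurable (ps c).2).sub (Lp.aestronglyMeasurable (ps d).2)))) ?_
    filter_upwards [ae_restrict_mem measurableSet_Icc] with t ht
    have h1 := hBv t ht _ (hpsO a t ht) (((ps b).2 : ℝ → E n) t)
    set A := ‖((ps b).2 : ℝ → E n) t‖
    set B := ‖((ps c).2 : ℝ → E n) t‖
    set C := ‖((ps d).2 : ℝ → E n) t‖
    have hA : 0 ≤ A := norm_nonneg _
    have hB : 0 ≤ B := norm_nonneg _
    have hC : 0 ≤ C := norm_nonneg _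
    calc ‖⟪Lv t (pathH (ps a) t) (((ps b).2 : ℝ → E n) t),
          ((ps c).2 : ℝ → E n) t - ((ps d).2 : ℝ → E n) t⟫‖
        ≤ ‖Lv t (pathH (ps a) t) (((ps b).2 : ℝ → E n) t)‖
            * ‖((ps c).2 : ℝ → E n) t - ((ps d).2 : ℝ → E n) t‖ := by
          rw [Real.norm_eq_abs]; exact abs_real_inner_le_norm _ _
      _ ≤ (C₀ + ℓ₁ * A) * (B + C) := by
          refine mul_le_mul h1 (norm_sub_le _ _) (norm_nonneg _) ?_
          exact add_nonneg hC₀nn (mul_nonneg hℓ₁.le hA)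
      _ ≤ (C₀ + ℓ₁) * (1 + A ^ 2 + 2 * B ^ 2 + 2 * C ^ 2) := by
          nlinarith [sq_nonneg (A - B), sq_nonneg (A - C), sq_nonneg (1 - B), sq_nonneg (1 - C),
            mul_nonneg hC₀nn hB, mul_nonneg hC₀nn hC, mul_nonneg hℓ₁.le (mul_nonneg hA hB),
            mul_nonneg hℓ₁.le (mul_nonneg hA hC), hℓ₁.le, hC₀nn, sq_nonneg A, sq_nonneg B, sq_nonneg C]
  have hintQ : ∀ a c d : ℕ, Integrable (fun t =>
      ⟪Lq t (pathH (ps a) t) (((ps a).2 : ℝ → E n) t),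
        pathH (ps c) t - pathH (ps d) t⟫) μ01 := by
    intro a c d
    set D : ℝ := (‖(ps c).1‖ + ‖(ps c).2‖) + (‖(ps d).1‖ + ‖(ps d).2‖) with hD
    have hDnn : 0 ≤ D := by positivity
    have hG : Integrable (fun t => (C₀ + ℓ₁ * (‖((ps a).2 : ℝ → E n) t‖
        + ‖((ps a).2 : ℝ → E n) t‖ ^ 2)) * D) μ01 := by
      refine Integrable.mul_const ?_ _
      exact (integrable_const C₀).add
        (((integrable_norm_L2 (ps a).2).add (integrable_normSq_L2 (ps a).2)).const_mul ℓ₁)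
    have haesmP : AEStronglyMeasurable (fun t => pathH (ps c) t - pathH (ps d) t) μ01 :=
      (((continuous_pathH (ps c)).sub (continuous_pathH (ps d))).aestronglyMeasurable)
    refine Integrable.mono' hG ((haesmQ a a).inner haesmP) ?_
    filter_upwards [ae_restrict_mem measurableSet_Icc] with t ht
    have h1 := hBq t ht _ (hpsO a t ht) (((ps a).2 : ℝ → E n) t)
    have h2 : ‖pathH (ps c) t - pathH (ps d) t‖ ≤ D := by
      refine (norm_sub_le _ _).trans ?_
      exact add_le_add (norm_pathH_le _ t) (norm_pathH_le _ t)
    calc ‖⟪Lq t (pathH (ps a) t) (((ps a).2 : ℝ → E n) t),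
          pathH (ps c) t - pathH (ps d) t⟫‖
        ≤ ‖Lq t (pathH (ps a) t) (((ps a).2 : ℝ → E n) t)‖
            * ‖pathH (ps c) t - pathH (ps d) t‖ := by
          rw [Real.norm_eq_abs]; exact abs_real_inner_le_norm _ _
      _ ≤ (C₀ + ℓ₁ * (‖((ps a).2 : ℝ → E n) t‖ + ‖((ps a).2 : ℝ → E n) t‖ ^ 2)) * D := by
          refine mul_le_mul h1 h2 (norm_nonneg _) ?_
          have : 0 ≤ ℓ₁ * (‖((ps a).2 : ℝ → E n) t‖ + ‖((ps a).2 : ℝ → E n) t‖ ^ 2) :=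
            mul_nonneg hℓ₁.le (by positivity)
          linarith

  -- Cauchy sequence of the second components
  have hCauchy2 : CauchySeq (fun a => (ps a).2) := by
    rw [Metric.cauchySeq_iff]
    intro ε hε
    set η : ℝ := (ε / 2) ^ 2 with hη
    have hηpos : 0 < η := by positivity
    set Mq : ℝ := C₀ + ℓ₁ * (R + R ^ 2) with hMq
    have hMqnn : 0 ≤ Mq := add_nonneg hC₀nn (mul_nonneg hℓ₁.le (by positivity))
    set Mv : ℝ := ℓ₁ * (1 + 3 * R ^ 2) with hMv
    have hMvnn : 0 ≤ Mv := mul_nonneg hℓ₁.le (by positivity)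
    set M : ℝ := 2 * Mq + Mv with hM
    have hMnn : 0 ≤ M := by linarith
    set ε₁ : ℝ := ℓ₂ * η / (2 * (4 * R + 1)) with hε₁
    have hε₁pos : 0 < ε₁ := div_pos (mul_pos hℓ₂ hηpos) (by nlinarith)
    set δ : ℝ := ℓ₂ * η / (2 * (M + 1)) with hδ
    have hδpos : 0 < δ := div_pos (mul_pos hℓ₂ hηpos) (by nlinarith)
    obtain ⟨N₁, hN₁⟩ := hsmall ε₁ hε₁pos
    obtain ⟨N₂, hN₂⟩ := Filter.eventually_atTop.mp
      (Metric.tendstoUniformlyOn_iff.mp hunif (min (ρ / 2) (δ / 2))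
        (lt_min (by linarith) (by linarith)))
    refine ⟨max N₁ N₂, fun h hh k hk => ?_⟩
    have hh1 : N₁ ≤ h := le_trans (le_max_left _ _) hh
    have hh2 : N₂ ≤ h := le_trans (le_max_right _ _) hh
    have hk1 : N₁ ≤ k := le_trans (le_max_left _ _) hk
    have hk2 : N₂ ≤ k := le_trans (le_max_right _ _) hk
    have hγδ : ∀ t ∈ Set.Icc (0:ℝ) 1, ‖pathH (ps h) t - pathH (ps k) t‖ ≤ δ := by
      intro t ht
      have h1 := hN₂ h hh2 t ht
      have h2 := hN₂ k hk2 t ht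
      have hmin : min (ρ / 2) (δ / 2) ≤ δ / 2 := min_le_right _ _
      calc ‖pathH (ps h) t - pathH (ps k) t‖ = dist (pathH (ps h) t) (pathH (ps k) t) := (dist_eq_norm _ _).symm
        _ ≤ dist (pathH (ps h) t) (g t) + dist (g t) (pathH (ps k) t) := dist_triangle _ _ _
        _ ≤ δ / 2 + δ / 2 := add_le_add
            (by rw [dist_comm]; exact le_of_lt (lt_of_lt_of_le h1 hmin))
            (le_of_lt (lt_of_lt_of_le h2 hmin))
        _ = δ := by ring
    have hballh : ∀ t ∈ Set.Icc (0:ℝ) 1, pathH (ps h) t ∈ Metric.ball (g t) ρ := by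
      intro t ht
      have h1 := hN₂ h hh2 t ht
      rw [Metric.mem_ball, dist_comm]
      exact lt_of_lt_of_le h1 ((min_le_left _ _).trans (by linarith))
    have hballk : ∀ t ∈ Set.Icc (0:ℝ) 1, pathH (ps k) t ∈ Metric.ball (g t) ρ := by
      intro t ht
      have h1 := hN₂ k hk2 t ht
      rw [Metric.mem_ball, dist_comm]
      exact lt_of_lt_of_le h1 ((min_le_left _ _).trans (by linarith))
    set ξ : Hsp n := ps h - ps k with hξdef
    have hξW : ξ ∈ HWsub W := Submodule.sub_mem _ (hpsW h) (hpsW k)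
    have hξn : ‖ξ‖ ≤ 2 * R := (norm_sub_le _ _).trans (by linarith [hR h, hR k])
    have hdh : |dAct Lq Lv (ps h) ξ| ≤ ε₁ * (2 * R) :=
      (hN₁ h hh1 ξ hξW).trans (mul_le_mul_of_nonneg_left hξn hε₁pos.le)
    have hdk : |dAct Lq Lv (ps k) ξ| ≤ ε₁ * (2 * R) :=
      (hN₁ k hk1 ξ hξW).trans (mul_le_mul_of_nonneg_left hξn hε₁pos.le)
    have intAh := hintQ h h k
    have intAk := hintQ k h k
    have intBh := hintV h h h k
    have intBk := hintV k k h k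
    have intBm := hintV h k h k
    have E1h : dAct Lq Lv (ps h) ξ
        = (∫ t, ⟪Lq t (pathH (ps h) t) (((ps h).2 : ℝ → E n) t), pathH (ps h) t - pathH (ps k) t⟫ ∂μ01)
          + ∫ t, ⟪Lv t (pathH (ps h) t) (((ps h).2 : ℝ → E n) t), ((ps h).2 : ℝ → E n) t - ((ps k).2 : ℝ → E n) t⟫ ∂μ01 := by
      rw [← integral_add intAh intBh]
      refine integral_congr_ae ?_
      filter_upwards [ae_restrict_mem measurableSet_Icc, Lp.coeFn_sub (ps h).2 (ps k).2]
        with t ht hsub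
      have hp : pathH ξ t = pathH (ps h) t - pathH (ps k) t := pathH_sub _ _ t ht
      have hw : (ξ.2 : ℝ → E n) t = ((ps h).2 : ℝ → E n) t - ((ps k).2 : ℝ → E n) t := hsub
      show ⟪Lq t (pathH (ps h) t) (((ps h).2 : ℝ → E n) t), pathH ξ t⟫ + ⟪Lv t (pathH (ps h) t) (((ps h).2 : ℝ → E n) t), (ξ.2 : ℝ → E n) t⟫
        = ⟪Lq t (pathH (ps h) t) (((ps h).2 : ℝ → E n) t), pathH (ps h) t - pathH (ps k) t⟫ + ⟪Lv t (pathH (ps h) t) (((ps h).2 : ℝ → E n) t), ((ps h).2 : ℝ → E n) t - ((ps k).2 : ℝ → E n) t⟫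
      rw [hp, hw]
    have E1k : dAct Lq Lv (ps k) ξ
        = (∫ t, ⟪Lq t (pathH (ps k) t) (((ps k).2 : ℝ → E n) t), pathH (ps h) t - pathH (ps k) t⟫ ∂μ01)
          + ∫ t, ⟪Lv t (pathH (ps k) t) (((ps k).2 : ℝ → E n) t), ((ps h).2 : ℝ → E n) t - ((ps k).2 : ℝ → E n) t⟫ ∂μ01 := by
      rw [← integral_add intAk intBk]
      refine integral_congr_ae ?_
      filter_upwards [ae_restrict_mem measurableSet_Icc, Lp.coeFn_sub (ps h).2 (ps k).2]
        with t ht hsub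
      have hp : pathH ξ t = pathH (ps h) t - pathH (ps k) t := pathH_sub _ _ t ht
      have hw : (ξ.2 : ℝ → E n) t = ((ps h).2 : ℝ → E n) t - ((ps k).2 : ℝ → E n) t := hsub
      show ⟪Lq t (pathH (ps k) t) (((ps k).2 : ℝ → E n) t), pathH ξ t⟫ + ⟪Lv t (pathH (ps k) t) (((ps k).2 : ℝ → E n) t), (ξ.2 : ℝ → E n) t⟫
        = ⟪Lq t (pathH (ps k) t) (((ps k).2 : ℝ → E n) t), pathH (ps h) t - pathH (ps k) t⟫ + ⟪Lv t (pathH (ps k) t) (((ps k).2 : ℝ → E n) t), ((ps h).2 : ℝ → E n) t - ((ps k).2 : ℝ → E n) t⟫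
      rw [hp, hw]
    have E2 : (∫ t, ⟪Lv t (pathH (ps h) t) (((ps h).2 : ℝ → E n) t), ((ps h).2 : ℝ → E n) t - ((ps k).2 : ℝ → E n) t⟫ ∂μ01)
          - ∫ t, ⟪Lv t (pathH (ps k) t) (((ps k).2 : ℝ → E n) t), ((ps h).2 : ℝ → E n) t - ((ps k).2 : ℝ → E n) t⟫ ∂μ01
        = (∫ t, (⟪Lv t (pathH (ps h) t) (((ps h).2 : ℝ → E n) t), ((ps h).2 : ℝ → E n) t - ((ps k).2 : ℝ → E n) t⟫
              - ⟪Lv t (pathH (ps h) t) (((ps k).2 : ℝ → E n) t), ((ps h).2 : ℝ → E n) t - ((ps k).2 : ℝ → E n) t⟫) ∂μ01)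
          + ∫ t, (⟪Lv t (pathH (ps h) t) (((ps k).2 : ℝ → E n) t), ((ps h).2 : ℝ → E n) t - ((ps k).2 : ℝ → E n) t⟫
              - ⟪Lv t (pathH (ps k) t) (((ps k).2 : ℝ → E n) t), ((ps h).2 : ℝ → E n) t - ((ps k).2 : ℝ → E n) t⟫) ∂μ01 := by
      have intS1 : Integrable (fun t => ⟪Lv t (pathH (ps h) t) (((ps h).2 : ℝ → E n) t), ((ps h).2 : ℝ → E n) t - ((ps k).2 : ℝ → E n) t⟫
          - ⟪Lv t (pathH (ps h) t) (((ps k).2 : ℝ → E n) t), ((ps h).2 : ℝ → E n) t - ((ps k).2 : ℝ → E n) t⟫) μ01 := intBh.sub intBm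
      have intS2 : Integrable (fun t => ⟪Lv t (pathH (ps h) t) (((ps k).2 : ℝ → E n) t), ((ps h).2 : ℝ → E n) t - ((ps k).2 : ℝ → E n) t⟫
          - ⟪Lv t (pathH (ps k) t) (((ps k).2 : ℝ → E n) t), ((ps h).2 : ℝ → E n) t - ((ps k).2 : ℝ → E n) t⟫) μ01 := intBm.sub intBk
      rw [← integral_sub intBh intBk, ← integral_add intS1 intS2]
      refine integral_congr_ae (Eventually.of_forall fun t => ?_)
      show _ = _
      ring
    have T1 : ℓ₂ * ∫ t, ‖((ps h).2 : ℝ → E n) t - ((ps k).2 : ℝ → E n) t‖ ^ 2 ∂μ01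
        ≤ ∫ t, (⟪Lv t (pathH (ps h) t) (((ps h).2 : ℝ → E n) t), ((ps h).2 : ℝ → E n) t - ((ps k).2 : ℝ → E n) t⟫
            - ⟪Lv t (pathH (ps h) t) (((ps k).2 : ℝ → E n) t), ((ps h).2 : ℝ → E n) t - ((ps k).2 : ℝ → E n) t⟫) ∂μ01 := by
      rw [← integral_const_mul]
      refine integral_mono_ae ((hintΔsq h k).const_mul ℓ₂) (intBh.sub intBm) ?_
      filter_upwards [ae_restrict_mem measurableSet_Icc] with t ht
      have hc := conv_lower hLvv hL2 ht (hpsO h t ht) (((ps h).2 : ℝ → E n) t) (((ps k).2 : ℝ → E n) t)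
      show ℓ₂ * ‖((ps h).2 : ℝ → E n) t - ((ps k).2 : ℝ → E n) t‖ ^ 2 ≤ _
      rw [← inner_sub_left]
      exact hc
    have hElem : ∀ a b : ℝ, 0 ≤ a → 0 ≤ b → (1 + a) * (b + a) ≤ 1 + 2 * a ^ 2 + b ^ 2 := by
      intro a b ha hb
      nlinarith [sq_nonneg (a - b), sq_nonneg (a - 1), sq_nonneg (b - 1)]
    have hG2int : Integrable (fun t => δ * (ℓ₁ * (1 + 2 * ‖((ps k).2 : ℝ → E n) t‖ ^ 2 + ‖((ps h).2 : ℝ → E n) t‖ ^ 2))) μ01 := by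
      refine Integrable.const_mul (Integrable.const_mul ?_ _) _
      exact ((integrable_const 1).add ((integrable_normSq_L2 (ps k).2).const_mul 2)).add
        (integrable_normSq_L2 (ps h).2)
    have T2 : |∫ t, (⟪Lv t (pathH (ps h) t) (((ps k).2 : ℝ → E n) t), ((ps h).2 : ℝ → E n) t - ((ps k).2 : ℝ → E n) t⟫
          - ⟪Lv t (pathH (ps k) t) (((ps k).2 : ℝ → E n) t), ((ps h).2 : ℝ → E n) t - ((ps k).2 : ℝ → E n) t⟫) ∂μ01| ≤ δ * Mv := by
      have habs : |∫ t, (⟪Lv t (pathH (ps h) t) (((ps k).2 : ℝ → E n) t), ((ps h).2 : ℝ → E n) t - ((ps k).2 : ℝ → E n) t⟫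
            - ⟪Lv t (pathH (ps k) t) (((ps k).2 : ℝ → E n) t), ((ps h).2 : ℝ → E n) t - ((ps k).2 : ℝ → E n) t⟫) ∂μ01|
          ≤ ∫ t, |⟪Lv t (pathH (ps h) t) (((ps k).2 : ℝ → E n) t), ((ps h).2 : ℝ → E n) t - ((ps k).2 : ℝ → E n) t⟫
            - ⟪Lv t (pathH (ps k) t) (((ps k).2 : ℝ → E n) t), ((ps h).2 : ℝ → E n) t - ((ps k).2 : ℝ → E n) t⟫| ∂μ01 := by
        simpa only [Real.norm_eq_abs] using
          norm_integral_le_integral_norm (μ := μ01)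
            (fun t => ⟪Lv t (pathH (ps h) t) (((ps k).2 : ℝ → E n) t), ((ps h).2 : ℝ → E n) t - ((ps k).2 : ℝ → E n) t⟫
              - ⟪Lv t (pathH (ps k) t) (((ps k).2 : ℝ → E n) t), ((ps h).2 : ℝ → E n) t - ((ps k).2 : ℝ → E n) t⟫)
      refine habs.trans ?_
      have hmono : ∫ t, |⟪Lv t (pathH (ps h) t) (((ps k).2 : ℝ → E n) t), ((ps h).2 : ℝ → E n) t - ((ps k).2 : ℝ → E n) t⟫
            - ⟪Lv t (pathH (ps k) t) (((ps k).2 : ℝ → E n) t), ((ps h).2 : ℝ → E n) t - ((ps k).2 : ℝ → E n) t⟫| ∂μ01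
          ≤ ∫ t, δ * (ℓ₁ * (1 + 2 * ‖((ps k).2 : ℝ → E n) t‖ ^ 2 + ‖((ps h).2 : ℝ → E n) t‖ ^ 2)) ∂μ01 := by
        refine integral_mono_ae (intBm.sub intBk).abs hG2int ?_
        filter_upwards [ae_restrict_mem measurableSet_Icc] with t ht
        have hdiff : ‖Lv t (pathH (ps h) t) (((ps k).2 : ℝ → E n) t) - Lv t (pathH (ps k) t) (((ps k).2 : ℝ → E n) t)‖
            ≤ ℓ₁ * (1 + ‖((ps k).2 : ℝ → E n) t‖) * δ := by
          refine (hLip t ht (((ps k).2 : ℝ → E n) t) _ (hballh t ht) _ (hballk t ht)).trans ?_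
          exact mul_le_mul_of_nonneg_left (hγδ t ht)
            (mul_nonneg hℓ₁.le (by positivity))
        have h1 : |⟪Lv t (pathH (ps h) t) (((ps k).2 : ℝ → E n) t), ((ps h).2 : ℝ → E n) t - ((ps k).2 : ℝ → E n) t⟫
              - ⟪Lv t (pathH (ps k) t) (((ps k).2 : ℝ → E n) t), ((ps h).2 : ℝ → E n) t - ((ps k).2 : ℝ → E n) t⟫|
            = |⟪Lv t (pathH (ps h) t) (((ps k).2 : ℝ → E n) t) - Lv t (pathH (ps k) t) (((ps k).2 : ℝ → E n) t), ((ps h).2 : ℝ → E n) t - ((ps k).2 : ℝ → E n) t⟫| := by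
          rw [inner_sub_left]
        rw [h1]
        calc |⟪Lv t (pathH (ps h) t) (((ps k).2 : ℝ → E n) t) - Lv t (pathH (ps k) t) (((ps k).2 : ℝ → E n) t), ((ps h).2 : ℝ → E n) t - ((ps k).2 : ℝ → E n) t⟫|
            ≤ ‖Lv t (pathH (ps h) t) (((ps k).2 : ℝ → E n) t) - Lv t (pathH (ps k) t) (((ps k).2 : ℝ → E n) t)‖ * ‖((ps h).2 : ℝ → E n) t - ((ps k).2 : ℝ → E n) t‖ :=
              abs_real_inner_le_norm _ _
          _ ≤ (ℓ₁ * (1 + ‖((ps k).2 : ℝ → E n) t‖) * δ) * (‖((ps h).2 : ℝ → E n) t‖ + ‖((ps k).2 : ℝ → E n) t‖) :=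
              mul_le_mul hdiff (norm_sub_le _ _) (norm_nonneg _)
                (mul_nonneg (mul_nonneg hℓ₁.le (by positivity)) hδpos.le)
          _ ≤ δ * (ℓ₁ * (1 + 2 * ‖((ps k).2 : ℝ → E n) t‖ ^ 2 + ‖((ps h).2 : ℝ → E n) t‖ ^ 2)) := by
              have h2 := hElem ‖((ps k).2 : ℝ → E n) t‖ ‖((ps h).2 : ℝ → E n) t‖ (norm_nonneg _) (norm_nonneg _)
              have h3 : 0 ≤ δ * ℓ₁ := mul_nonneg hδpos.le hℓ₁.le
              nlinarith [h2, h3, mul_le_mul_of_nonneg_left h2 h3]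
      refine hmono.trans ?_
      have hval : ∫ t, δ * (ℓ₁ * (1 + 2 * ‖((ps k).2 : ℝ → E n) t‖ ^ 2 + ‖((ps h).2 : ℝ → E n) t‖ ^ 2)) ∂μ01
          = δ * (ℓ₁ * ((1 + 2 * ∫ t, ‖((ps k).2 : ℝ → E n) t‖ ^ 2 ∂μ01) + ∫ t, ‖((ps h).2 : ℝ → E n) t‖ ^ 2 ∂μ01)) := by
        rw [integral_const_mul, integral_const_mul]
        congr 2
        have i1 : Integrable (fun t => 2 * ‖((ps k).2 : ℝ → E n) t‖ ^ 2) μ01 :=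
          (integrable_normSq_L2 (ps k).2).const_mul 2
        have i2 : Integrable (fun t => 1 + 2 * ‖((ps k).2 : ℝ → E n) t‖ ^ 2) μ01 := (integrable_const 1).add i1
        rw [integral_add i2 (integrable_normSq_L2 (ps h).2), integral_add (integrable_const 1) i1,
          integral_const, integral_const_mul]
        simp
      rw [hval, hMv]
      have hk2' := hIsq k
      have hh2' := hIsq h
      have hknn : (0:ℝ) ≤ ∫ t, ‖((ps k).2 : ℝ → E n) t‖ ^ 2 ∂μ01 :=
        integral_nonneg fun t => sq_nonneg _
      have hhnn : (0:ℝ) ≤ ∫ t, ‖((ps h).2 : ℝ → E n) t‖ ^ 2 ∂μ01 :=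
        integral_nonneg fun t => sq_nonneg _
      have : (1 + 2 * ∫ t, ‖((ps k).2 : ℝ → E n) t‖ ^ 2 ∂μ01) + ∫ t, ‖((ps h).2 : ℝ → E n) t‖ ^ 2 ∂μ01
          ≤ 1 + 3 * R ^ 2 := by nlinarith
      nlinarith [mul_nonneg hδpos.le hℓ₁.le, hδpos.le, hℓ₁.le]
    have Qbd : ∀ a : ℕ, |∫ t, ⟪Lq t (pathH (ps a) t) (((ps a).2 : ℝ → E n) t),
        pathH (ps h) t - pathH (ps k) t⟫ ∂μ01| ≤ δ * Mq := by
      intro a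
      have habs : |∫ t, ⟪Lq t (pathH (ps a) t) (((ps a).2 : ℝ → E n) t),
            pathH (ps h) t - pathH (ps k) t⟫ ∂μ01|
          ≤ ∫ t, |⟪Lq t (pathH (ps a) t) (((ps a).2 : ℝ → E n) t),
            pathH (ps h) t - pathH (ps k) t⟫| ∂μ01 := by
        simpa only [Real.norm_eq_abs] using
          norm_integral_le_integral_norm (μ := μ01)
            (fun t => ⟪Lq t (pathH (ps a) t) (((ps a).2 : ℝ → E n) t), pathH (ps h) t - pathH (ps k) t⟫)
      refine habs.trans ?_
      have hGint : Integrable (fun t => δ * (C₀ + ℓ₁ * (‖((ps a).2 : ℝ → E n) t‖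
          + ‖((ps a).2 : ℝ → E n) t‖ ^ 2))) μ01 := by
        refine Integrable.const_mul ?_ _
        exact (integrable_const C₀).add
          (((integrable_norm_L2 (ps a).2).add (integrable_normSq_L2 (ps a).2)).const_mul ℓ₁)
      have hmono : ∫ t, |⟪Lq t (pathH (ps a) t) (((ps a).2 : ℝ → E n) t),
            pathH (ps h) t - pathH (ps k) t⟫| ∂μ01
          ≤ ∫ t, δ * (C₀ + ℓ₁ * (‖((ps a).2 : ℝ → E n) t‖
            + ‖((ps a).2 : ℝ → E n) t‖ ^ 2)) ∂μ01 := by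
        refine integral_mono_ae (hintQ a h k).abs hGint ?_
        filter_upwards [ae_restrict_mem measurableSet_Icc] with t ht
        have h1 := hBq t ht _ (hpsO a t ht) (((ps a).2 : ℝ → E n) t)
        have h2 := hγδ t ht
        have h3 : 0 ≤ C₀ + ℓ₁ * (‖((ps a).2 : ℝ → E n) t‖ + ‖((ps a).2 : ℝ → E n) t‖ ^ 2) := by
          have : 0 ≤ ℓ₁ * (‖((ps a).2 : ℝ → E n) t‖ + ‖((ps a).2 : ℝ → E n) t‖ ^ 2) :=
            mul_nonneg hℓ₁.le (by positivity)
          linarith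
        calc |⟪Lq t (pathH (ps a) t) (((ps a).2 : ℝ → E n) t), pathH (ps h) t - pathH (ps k) t⟫|
            ≤ ‖Lq t (pathH (ps a) t) (((ps a).2 : ℝ → E n) t)‖ * ‖pathH (ps h) t - pathH (ps k) t‖ :=
              abs_real_inner_le_norm _ _
          _ ≤ (C₀ + ℓ₁ * (‖((ps a).2 : ℝ → E n) t‖ + ‖((ps a).2 : ℝ → E n) t‖ ^ 2)) * δ :=
              mul_le_mul h1 h2 (norm_nonneg _) h3
          _ = δ * (C₀ + ℓ₁ * (‖((ps a).2 : ℝ → E n) t‖ + ‖((ps a).2 : ℝ → E n) t‖ ^ 2)) := by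
              ring
      refine hmono.trans ?_
      have hval : ∫ t, δ * (C₀ + ℓ₁ * (‖((ps a).2 : ℝ → E n) t‖
            + ‖((ps a).2 : ℝ → E n) t‖ ^ 2)) ∂μ01
          = δ * (C₀ + ℓ₁ * ((∫ t, ‖((ps a).2 : ℝ → E n) t‖ ∂μ01)
            + ∫ t, ‖((ps a).2 : ℝ → E n) t‖ ^ 2 ∂μ01)) := by
        rw [integral_const_mul]
        congr 1
        have i1 : Integrable (fun t => ‖((ps a).2 : ℝ → E n) t‖
            + ‖((ps a).2 : ℝ → E n) t‖ ^ 2) μ01 :=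
          (integrable_norm_L2 (ps a).2).add (integrable_normSq_L2 (ps a).2)
        have i2 : Integrable (fun t => ℓ₁ * (‖((ps a).2 : ℝ → E n) t‖
            + ‖((ps a).2 : ℝ → E n) t‖ ^ 2)) μ01 := i1.const_mul ℓ₁
        rw [integral_add (integrable_const C₀) i2, integral_const, integral_const_mul,
          integral_add (integrable_norm_L2 (ps a).2) (integrable_normSq_L2 (ps a).2)]
        simp
      rw [hval, hMq]
      have h4 := hInorm a
      have h5 := hIsq a
      have h6 : (∫ t, ‖((ps a).2 : ℝ → E n) t‖ ∂μ01)
          + ∫ t, ‖((ps a).2 : ℝ → E n) t‖ ^ 2 ∂μ01 ≤ R + R ^ 2 := by linarith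
      nlinarith [hδpos.le, hℓ₁.le, mul_nonneg hδpos.le hℓ₁.le]
    have key : ℓ₂ * ∫ t, ‖((ps h).2 : ℝ → E n) t - ((ps k).2 : ℝ → E n) t‖ ^ 2 ∂μ01
        ≤ ε₁ * (2 * R) + ε₁ * (2 * R) + (δ * Mq + δ * Mq + δ * Mv) := by
      have habs1 := le_abs_self (dAct Lq Lv (ps h) ξ)
      have habs2 := neg_abs_le (dAct Lq Lv (ps k) ξ)
      have habs3 := neg_abs_le (∫ t, ⟪Lq t (pathH (ps h) t) (((ps h).2 : ℝ → E n) t), pathH (ps h) t - pathH (ps k) t⟫ ∂μ01)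
      have habs4 := le_abs_self (∫ t, ⟪Lq t (pathH (ps k) t) (((ps k).2 : ℝ → E n) t), pathH (ps h) t - pathH (ps k) t⟫ ∂μ01)
      have habs5 := neg_abs_le (∫ t, (⟪Lv t (pathH (ps h) t) (((ps k).2 : ℝ → E n) t), ((ps h).2 : ℝ → E n) t - ((ps k).2 : ℝ → E n) t⟫
          - ⟪Lv t (pathH (ps k) t) (((ps k).2 : ℝ → E n) t), ((ps h).2 : ℝ → E n) t - ((ps k).2 : ℝ → E n) t⟫) ∂μ01)
      have hQh := Qbd h
      have hQk := Qbd k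
      linarith [T1, E2, E1h, E1k, hdh, hdk, T2]
    have hintfin : ∫ t, ‖((ps h).2 : ℝ → E n) t - ((ps k).2 : ℝ → E n) t‖ ^ 2 ∂μ01 ≤ η := by
      have hx1 : ε₁ * (2 * (4 * R + 1)) = ℓ₂ * η := by
        rw [hε₁]; field_simp
      have h1 : ε₁ * (2 * R) + ε₁ * (2 * R) ≤ ℓ₂ * η / 2 := by nlinarith [hε₁pos.le, hRnn]
      have hx2 : δ * (2 * (M + 1)) = ℓ₂ * η := by
        rw [hδ]; field_simp
      have h2 : δ * Mq + δ * Mq + δ * Mv ≤ ℓ₂ * η / 2 := by nlinarith [hδpos.le]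
      nlinarith [key, hℓ₂]
    have hdist : dist (ps h).2 (ps k).2 ≤ ε / 2 := by
      rw [dist_eq_norm]
      have hsq : ‖(ps h).2 - (ps k).2‖ ^ 2 = ∫ t, ‖((ps h).2 : ℝ → E n) t - ((ps k).2 : ℝ → E n) t‖ ^ 2 ∂μ01 := by
        rw [← integral_normSq_L2 ((ps h).2 - (ps k).2)]
        refine integral_congr_ae ?_
        filter_upwards [Lp.coeFn_sub (ps h).2 (ps k).2] with t ht
        rw [ht]
        simp
      have hpos : 0 < ‖(ps h).2 - (ps k).2‖ + ε / 2 := by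
        have := norm_nonneg ((ps h).2 - (ps k).2); linarith
      nlinarith [norm_nonneg ((ps h).2 - (ps k).2), hintfin, hpos, hsq]
    exact lt_of_le_of_lt hdist (by linarith)
  -- limits and conclusion
  obtain ⟨u, hu⟩ := cauchySeq_tendsto_of_complete hCauchy2
  have h1lim : Tendsto (fun a => (ps a).1) atTop (𝓝 (g 0)) := by
    have h := hunif.tendsto_at h0I
    have heq : (fun a => pathH (ps a) 0) = fun a => (ps a).1 := by
      funext a; exact pathH_zero_eq (ps a)
    rwa [heq] at h
  have htend : Tendsto ps atTop (𝓝 ((g 0, u) : Hsp n)) := h1lim.prodMk_nhds hu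
  have hpath : ∀ t ∈ Set.Icc (0:ℝ) 1, pathH ((g 0, u) : Hsp n) t = g t := by
    intro t ht
    have hbnd : ∀ a : ℕ, ‖pathH (ps a) t - pathH ((g 0, u) : Hsp n) t‖
        ≤ ‖(ps a).1 - g 0‖ + ‖(ps a).2 - u‖ :=
      fun a => norm_pathH_sub_le (ps a) ((g 0, u) : Hsp n) t ht
    have hz1 : Tendsto (fun a => ‖(ps a).1 - g 0‖) atTop (𝓝 0) :=
      tendsto_iff_norm_sub_tendsto_zero.mp h1lim
    have hz2 : Tendsto (fun a => ‖(ps a).2 - u‖) atTop (𝓝 0) :=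
      tendsto_iff_norm_sub_tendsto_zero.mp hu
    have hzz : Tendsto (fun a => ‖(ps a).1 - g 0‖ + ‖(ps a).2 - u‖) atTop (𝓝 0) := by
      simpa using hz1.add hz2
    have hlim : Tendsto (fun a => pathH (ps a) t) atTop (𝓝 (pathH ((g 0, u) : Hsp n) t)) := by
      rw [tendsto_iff_norm_sub_tendsto_zero]
      exact squeeze_zero (fun a => norm_nonneg _) hbnd hzz
    exact tendsto_nhds_unique hlim (hunif.tendsto_at ht)
  refine ⟨((g 0, u) : Hsp n), ?_, ?_, htend, hpath⟩
  · intro t ht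
    rw [hpath t ht]
    exact hgU t ht
  · show (pathH ((g 0, u) : Hsp n) 0, pathH ((g 0, u) : Hsp n) 1) ∈ W
    rw [hpath 0 h0I, hpath 1 h1I]
    have hWc : IsClosed (W : Set (E n × E n)) := Submodule.closed_of_finiteDimensional W
    refine hWc.mem_of_tendsto ((hunif.tendsto_at h0I).prodMk_nhds (hunif.tendsto_at h1I))
      (Eventually.of_forall fun a => ?_)
    exact hpsW a
end
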